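/- arXiv:0911.3760 — 3 statements merged into one kernel-verified Lean document; each statement's English description precedes it below -/
import Mathlib

section
/- (m-Permutability for (F,Η)) Let F be an r-sort species admitting a composition operator Η. If Ω1,...,Ωm (m ≥ 2) are pairwise componentwise-disjoint r-tuples of finite sets, then all Η-bracketings of F[Ω1],...,F[Ωm] are equal to each other; indeed, each equals the intersection, over all ordered pairs (I,J) of nonempty disjoint subsets with I ∪ J = {1,...,m}, of the sets η(F[Ω_I] × F[Ω_J]), where Ω_I denotes the componentwise disjoint union of the Ωi for i ∈ I. -/
open scoped Classical

noncomputable section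

/-- Objects of `Set^r`: `r`-tuples of finite sets (realized as finite subsets of `ℕ`). -/
abbrev Obj (r : ℕ) := Fin r → Finset ℕ

variable {r : ℕ}

/-- The `r`-tuple of empty sets. -/
def oEmpty (r : ℕ) : Obj r := fun _ => ∅

/-- Componentwise union (the disjoint union `⨿` when the arguments are
componentwise disjoint). -/
def oUnion (Ω₁ Ω₂ : Obj r) : Obj r := fun i => Ω₁ i ∪ Ω₂ i

/-- Componentwise intersection. -/
def oInter (Ω₁ Ω₂ : Obj r) : Obj r := fun i => Ω₁ i ∩ Ω₂ i

/-- Componentwise set difference. -/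
def oDiff (Ω₁ Ω₂ : Obj r) : Obj r := fun i => Ω₁ i \ Ω₂ i

/-- Componentwise disjointness. -/
def oDisj (Ω₁ Ω₂ : Obj r) : Prop := ∀ i, Disjoint (Ω₁ i) (Ω₂ i)

/-- Componentwise containment. -/
def oSub (Ω₁ Ω₂ : Obj r) : Prop := ∀ i, Ω₁ i ⊆ Ω₂ i

/-- A morphism of `Set^r`: an `r`-tuple of bijections between the components. -/
def Mor (Ω₁ Ω₂ : Obj r) : Type := ∀ i, {x // x ∈ Ω₁ i} ≃ {x // x ∈ Ω₂ i}

/-- The identity morphism. -/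
def idMor (Ω : Obj r) : Mor Ω Ω := fun _ => Equiv.refl _

/-- Composition of morphisms. -/
def compMor {Ω₁ Ω₂ Ω₃ : Obj r} (f : Mor Ω₁ Ω₂) (g : Mor Ω₂ Ω₃) : Mor Ω₁ Ω₃ :=
  fun i => (f i).trans (g i)

/-- An `r`-sort species: a (covariant) functor from `Set^r` to the category of
finite sets and bijections.  The value `F[Ω]` is the finite set `obj Ω`, and the
action on a morphism `f` is encoded by the function `map f : ℕ → ℕ` (only its
values on `obj Ω₁` are relevant). -/
structure Species (r : ℕ) where
  obj : Obj r → Finset ℕ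
  map : ∀ {Ω₁ Ω₂ : Obj r}, Mor Ω₁ Ω₂ → ℕ → ℕ
  map_mem : ∀ {Ω₁ Ω₂ : Obj r} (f : Mor Ω₁ Ω₂), ∀ x ∈ obj Ω₁, map f x ∈ obj Ω₂
  map_id : ∀ (Ω : Obj r), ∀ x ∈ obj Ω, map (idMor Ω) x = x
  map_comp : ∀ {Ω₁ Ω₂ Ω₃ : Obj r} (f : Mor Ω₁ Ω₂) (g : Mor Ω₂ Ω₃), ∀ x ∈ obj Ω₁,
    map (compMor f g) x = map g (map f x)

/-- The canonical identification of a disjoint union `s ∪ t` with the sum `s ⊕ t`. -/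
def finsetSumEquiv {s t : Finset ℕ} (h : Disjoint s t) :
    {x // x ∈ s ∪ t} ≃ {x // x ∈ s} ⊕ {x // x ∈ t} :=
  (Equiv.subtypeEquivRight (fun x => by simp)).trans
    (Equiv.Set.union (s := (↑s : Set ℕ)) (t := (↑t : Set ℕ)) (by exact_mod_cast h))

/-- The disjoint union of two bijections, as a bijection between unions. -/
def finsetUnionEquiv {s t s' t' : Finset ℕ} (h : Disjoint s t) (h' : Disjoint s' t')
    (f : {x // x ∈ s} ≃ {x // x ∈ s'}) (g : {x // x ∈ t} ≃ {x // x ∈ t'}) :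
    {x // x ∈ s ∪ t} ≃ {x // x ∈ s' ∪ t'} :=
  (finsetSumEquiv h).trans ((f.sumCongr g).trans (finsetSumEquiv h').symm)

/-- The disjoint union `f ⨿ g` of two morphisms of `Set^r`. -/
def morUnion {Ω₁ Ω₂ Ω₁' Ω₂' : Obj r} (h : oDisj Ω₁ Ω₂) (h' : oDisj Ω₁' Ω₂')
    (f : Mor Ω₁ Ω₁') (g : Mor Ω₂ Ω₂') : Mor (oUnion Ω₁ Ω₂) (oUnion Ω₁' Ω₂') :=
  fun i => finsetUnionEquiv (h i) (h' i) (f i) (g i)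

/-- A composition operator `Η` for the species `F`: a natural transformation from
`F × F` (on pairs of componentwise disjoint objects) to `F ∘ ⨿` with injective
components, satisfying Axiom (D1). -/
structure CompOp {r : ℕ} (F : Species r) where
  η : Obj r → Obj r → ℕ × ℕ → ℕ
  mem_η : ∀ {Ω₁ Ω₂ : Obj r}, oDisj Ω₁ Ω₂ → ∀ x ∈ F.obj Ω₁, ∀ y ∈ F.obj Ω₂,
    η Ω₁ Ω₂ (x, y) ∈ F.obj (oUnion Ω₁ Ω₂)
  inj_η : ∀ {Ω₁ Ω₂ : Obj r}, oDisj Ω₁ Ω₂ →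
    Set.InjOn (η Ω₁ Ω₂) ((F.obj Ω₁ : Set ℕ) ×ˢ (F.obj Ω₂ : Set ℕ))
  natural : ∀ {Ω₁ Ω₂ Ω₁' Ω₂' : Obj r} (h : oDisj Ω₁ Ω₂) (h' : oDisj Ω₁' Ω₂')
    (f : Mor Ω₁ Ω₁') (g : Mor Ω₂ Ω₂'), ∀ x ∈ F.obj Ω₁, ∀ y ∈ F.obj Ω₂,
    F.map (morUnion h h' f g) (η Ω₁ Ω₂ (x, y)) = η Ω₁' Ω₂' (F.map f x, F.map g y)
  D1 : ∀ {Ω₁ Ω₂ Ω₃ Ω₄ : Obj r}, oDisj Ω₁ Ω₂ → oDisj Ω₃ Ω₄ →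
    oUnion Ω₁ Ω₂ = oUnion Ω₃ Ω₄ →
    η Ω₁ Ω₂ '' ((F.obj Ω₁ : Set ℕ) ×ˢ (F.obj Ω₂ : Set ℕ)) ∩
      η Ω₃ Ω₄ '' ((F.obj Ω₃ : Set ℕ) ×ˢ (F.obj Ω₄ : Set ℕ)) =
    η Ω₁ Ω₂ ''
      ((η (oInter Ω₁ Ω₃) (oInter Ω₁ Ω₄) ''
          ((F.obj (oInter Ω₁ Ω₃) : Set ℕ) ×ˢ (F.obj (oInter Ω₁ Ω₄) : Set ℕ))) ×ˢ
        (η (oInter Ω₂ Ω₃) (oInter Ω₂ Ω₄) ''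
          ((F.obj (oInter Ω₂ Ω₃) : Set ℕ) ×ˢ (F.obj (oInter Ω₂ Ω₄) : Set ℕ))))

/-- The set `F_Η[Ω]` of indecomposable elements of `F[Ω]`. -/
def indec (F : Species r) (E : CompOp F) (Ω : Obj r) : Set ℕ :=
  if Ω = oEmpty r then ∅
  else (F.obj Ω : Set ℕ) \
    ⋃ (p : Obj r × Obj r) (_ : oDisj p.1 p.2) (_ : p.1 ≠ oEmpty r) (_ : p.2 ≠ oEmpty r)
      (_ : oUnion p.1 p.2 = Ω),
      E.η p.1 p.2 '' ((F.obj p.1 : Set ℕ) ×ˢ (F.obj p.2 : Set ℕ))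

/-- The sets `F_Η^(k)[Ω]` of elements of `F[Ω]` consisting of exactly `k`
indecomposable components. -/
def indecK (F : Species r) (E : CompOp F) : ℕ → Obj r → Set ℕ
  | 0 => fun Ω => if Ω = oEmpty r then (F.obj (oEmpty r) : Set ℕ) else ∅
  | (k + 1) => fun Ω => ⋃ (Ω₁ : Obj r) (_ : oSub Ω₁ Ω),
      E.η Ω₁ (oDiff Ω Ω₁) '' ((indec F E Ω₁) ×ˢ (indecK F E k (oDiff Ω Ω₁)))

/-- `Ω_I`: the componentwise disjoint union of the family `Ωs` over the index set `s`. -/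
def bigU {ι : Type} [DecidableEq ι] (Ωs : ι → Obj r) (s : Finset ι) : Obj r :=
  fun i => s.biUnion (fun j => Ωs j i)

/-- `Brack F E Ωs leaf s B` says that `B` is an `Η`-bracketing of the sets
`leaf (Ωs i)`, `i ∈ s` (each occurring exactly once).  For `leaf Ω = F[Ω]` this is an
`Η`-bracketing of the `F[Ωs i]`; for `leaf = indec F E` it is an `Η`-bracketing of
the `F_Η[Ωs i]`. -/
inductive Brack (F : Species r) (E : CompOp F) {ι : Type} [DecidableEq ι]
    (Ωs : ι → Obj r) (leaf : Obj r → Set ℕ) : Finset ι → Set ℕ → Prop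
  | single (i : ι) : Brack F E Ωs leaf {i} (leaf (Ωs i))
  | node {s t : Finset ι} {B₁ B₂ : Set ℕ} :
      Disjoint s t → s.Nonempty → t.Nonempty →
      Brack F E Ωs leaf s B₁ → Brack F E Ωs leaf t B₂ →
      Brack F E Ωs leaf (s ∪ t) (E.η (bigU Ωs s) (bigU Ωs t) '' (B₁ ×ˢ B₂))

/-- A `Λ`-weight on `(F, Η)`: Axioms (W0), (W1), (W2). -/
structure Weight {r : ℕ} (F : Species r) (E : CompOp F) (Λ : Type) [CommRing Λ]
    [Algebra ℚ Λ] where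
  w : Obj r → ℕ → Λ
  W0 : ∀ x ∈ F.obj (oEmpty r), w (oEmpty r) x = 1
  W1 : ∀ {Ω Ω' : Obj r} (f : Mor Ω Ω'), ∀ x ∈ F.obj Ω, w Ω' (F.map f x) = w Ω x
  W2 : ∀ {Ω₁ Ω₂ : Obj r}, oDisj Ω₁ Ω₂ → ∀ x ∈ indec F E Ω₁, ∀ y ∈ F.obj Ω₂,
    w (oUnion Ω₁ Ω₂) (E.η Ω₁ Ω₂ (x, y)) = w Ω₁ x * w Ω₂ y

/-- The standard object `([n₁], …, [n_r])`, with `[n] = {1, …, n}`. -/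
def stdObj {r : ℕ} (n : Fin r → ℕ) : Obj r := fun i => Finset.Icc 1 (n i)

/-- The exponential generating function
`Σ_{n₁,…,n_r ≥ 0} Σ_{x ∈ S[([n₁],…,[n_r])]} w(x) z₁^{n₁} ⋯ z_r^{n_r}/(n₁! ⋯ n_r!)`
of a subfamily `S` of a species `F`, with respect to a weight `w`. -/
def GF {r : ℕ} {Λ : Type} [CommRing Λ] [Algebra ℚ Λ] (F : Species r)
    (S : Obj r → Set ℕ) (w : Obj r → ℕ → Λ) : MvPowerSeries (Fin r) Λ :=
  fun d => (algebraMap ℚ Λ (∏ i, (1 / (Nat.factorial (d i)) : ℚ))) *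
    ∑ x ∈ (F.obj (stdObj fun i => d i)).filter (fun x => x ∈ S (stdObj fun i => d i)),
      w (stdObj fun i => d i) x

/-- The exponential `exp f = Σ_{k ≥ 0} f^k / k!` of a multivariate formal power
series `f` with zero constant term (the coefficient of a given monomial only
receives contributions from `k` at most the total degree). -/
def mvExp {σ Λ : Type} [CommRing Λ] [Algebra ℚ Λ] (f : MvPowerSeries σ Λ) :
    MvPowerSeries σ Λ :=
  fun d => ∑ k ∈ Finset.range ((d.sum fun _ m => m) + 1),
    algebraMap ℚ Λ ((1 : ℚ) / (Nat.factorial k)) * MvPowerSeries.coeff d (f ^ k)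

/-- The logarithm `log f = Σ_{k ≥ 1} (-1)^{k+1} (f-1)^k / k` of a multivariate
formal power series `f` with constant term `1`. -/
def mvLog {σ Λ : Type} [CommRing Λ] [Algebra ℚ Λ] (f : MvPowerSeries σ Λ) :
    MvPowerSeries σ Λ :=
  fun d => ∑ k ∈ Finset.Icc 1 (d.sum fun _ m => m),
    algebraMap ℚ Λ ((-1 : ℚ) ^ (k + 1) / k) * MvPowerSeries.coeff d ((f - 1) ^ k)

/-- The refined generating function `G̃F_F(z₁,…,z_r,y)`, a power series in
`z₁, …, z_r` with coefficients that are polynomials in `y` (recorded via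
`Polynomial Λ`, the variable `y` being `Polynomial.X`):
`Σ_{n₁,…,n_r ≥ 0} Σ_k Σ_{x ∈ F_Η^(k)[([n₁],…,[n_r])]} y^k w(x) z₁^{n₁}⋯z_r^{n_r}/(n₁!⋯n_r!)`
(for fixed `n₁, …, n_r` only the `k ≤ n₁ + ⋯ + n_r` contribute, since
`F_Η^(k)[Ω] = ∅ for k > ‖Ω‖`). -/
def tGF {r : ℕ} {Λ : Type} [CommRing Λ] [Algebra ℚ Λ] (F : Species r) (E : CompOp F)
    (w : Obj r → ℕ → Λ) : MvPowerSeries (Fin r) (Polynomial Λ) :=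
  fun d => Polynomial.C (algebraMap ℚ Λ (∏ i, (1 / (Nat.factorial (d i)) : ℚ))) *
    ∑ k ∈ Finset.range ((∑ i, d i) + 1), Polynomial.X ^ k *
      Polynomial.C (∑ x ∈ (F.obj (stdObj fun i => d i)).filter
          (fun x => x ∈ indecK F E k (stdObj fun i => d i)),
        w (stdObj fun i => d i) x)

/-- The species `E(F_Η)` of sets of `F_Η`-structures:  `E(F_Η)[Ω]` consists of all
finite sets `{(x₁,Ω₁),…,(x_k,Ω_k)}` with `x_i ∈ F_Η[Ω_i]`, the `Ω_i` nonempty and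
pairwise componentwise disjoint, and `Ω₁ ⨿ ⋯ ⨿ Ω_k = Ω`. -/
def ESet {r : ℕ} (F : Species r) (E : CompOp F) (Ω : Obj r) :
    Set (Finset (ℕ × Obj r)) :=
  { s | (∀ p ∈ s, p.1 ∈ indec F E p.2 ∧ p.2 ≠ oEmpty r) ∧
        (∀ p ∈ s, ∀ q ∈ s, p ≠ q → oDisj p.2 q.2) ∧
        (∀ i, Ω i = s.biUnion (fun p => p.2 i)) }

/-- The bijection between a finite set and its image under a map injective on it. -/
def imageEquiv {u : Finset ℕ} (g : ℕ → ℕ) (hg : Set.InjOn g (u : Set ℕ)) :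
    {x // x ∈ u} ≃ {x // x ∈ u.image g} :=
  Equiv.ofBijective (fun x => ⟨g x, Finset.mem_image_of_mem g x.2⟩) (by
    constructor
    · rintro ⟨a, ha⟩ ⟨b, hb⟩ hab
      exact Subtype.ext (hg (by exact_mod_cast ha) (by exact_mod_cast hb)
        (congrArg Subtype.val hab))
    · rintro ⟨y, hy⟩
      rcases Finset.mem_image.mp hy with ⟨a, ha, rfl⟩
      exact ⟨⟨a, ha⟩, rfl⟩)

/-- The underlying function `ℕ → ℕ` of the `i`-th component of a morphism. -/
def apMor {Ω Ω' : Obj r} (f : Mor Ω Ω') (i : Fin r) (a : ℕ) : ℕ :=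
  if h : a ∈ Ω i then ((f i) ⟨a, h⟩ : ℕ) else a

/-- The componentwise image of a subobject `O ⊆ Ω` under a morphism `f : Ω → Ω'`. -/
def oImage {Ω Ω' : Obj r} (f : Mor Ω Ω') (O : Obj r) : Obj r :=
  fun i => (O i).image (apMor f i)

/-- The restriction of a morphism `f : Ω → Ω'` to a subobject `O ⊆ Ω`. -/
def restrictMor {Ω Ω' : Obj r} (f : Mor Ω Ω') {O : Obj r} (hO : oSub O Ω) :
    Mor O (oImage f O) :=
  fun i => imageEquiv (apMor f i) (by
    intro a ha b hb hab
    have ha' : a ∈ Ω i := hO i (by exact_mod_cast ha)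
    have hb' : b ∈ Ω i := hO i (by exact_mod_cast hb)
    have h1 : ((f i) ⟨a, ha'⟩ : ℕ) = ((f i) ⟨b, hb'⟩ : ℕ) := by
      simpa [apMor, dif_pos ha', dif_pos hb'] using hab
    have h2 := (f i).injective (Subtype.ext h1)
    exact congrArg Subtype.val h2)

/-- The induced action of a morphism `f : Ω → Ω'` on `E(F_Η)[Ω]`. -/
def Emap {r : ℕ} (F : Species r) {Ω Ω' : Obj r} (f : Mor Ω Ω')
    (s : Finset (ℕ × Obj r)) : Finset (ℕ × Obj r) :=
  s.image (fun p =>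
    if h : oSub p.2 Ω then (F.map (restrictMor f h) p.1, oImage f p.2) else p)


section PermutabilityAux

variable {r : ℕ}

lemma oUnion_oEmpty (Ω : Obj r) : oUnion Ω (oEmpty r) = Ω := by
  funext i; simp [oUnion, oEmpty]

lemma oEmpty_oUnion (Ω : Obj r) : oUnion (oEmpty r) Ω = Ω := by
  funext i; simp [oUnion, oEmpty]

lemma oDisj_symm {Ω₁ Ω₂ : Obj r} (h : oDisj Ω₁ Ω₂) : oDisj Ω₂ Ω₁ :=
  fun i => (h i).symm

lemma oDisj_oEmpty_right (Ω : Obj r) : oDisj Ω (oEmpty r) := fun i => by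
  simp [oEmpty]

lemma oDisj_oEmpty_left (Ω : Obj r) : oDisj (oEmpty r) Ω := fun i => by
  simp [oEmpty]

lemma oInter_self (Ω : Obj r) : oInter Ω Ω = Ω := by
  funext i; simp [oInter]

lemma oInter_of_oDisj {Ω₁ Ω₂ : Obj r} (h : oDisj Ω₁ Ω₂) : oInter Ω₁ Ω₂ = oEmpty r := by
  funext i
  simpa [oInter, oEmpty] using Finset.disjoint_iff_inter_eq_empty.mp (h i)

section bigUfacts
variable {m : ℕ} {Ωs : Fin m → Obj r}

lemma bigU_empty : bigU Ωs (∅ : Finset (Fin m)) = oEmpty r := by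
  funext i; simp [bigU, oEmpty]

lemma bigU_singleton (i : Fin m) : bigU Ωs ({i} : Finset (Fin m)) = Ωs i := by
  funext j; simp [bigU]

lemma bigU_union (s t : Finset (Fin m)) :
    bigU Ωs (s ∪ t) = oUnion (bigU Ωs s) (bigU Ωs t) := by
  funext i; ext x
  simp only [bigU, oUnion, Finset.mem_biUnion, Finset.mem_union]
  constructor
  · rintro ⟨a, ha | ha, hx⟩
    · exact Or.inl ⟨a, ha, hx⟩
    · exact Or.inr ⟨a, ha, hx⟩
  · rintro (⟨a, ha, hx⟩ | ⟨a, ha, hx⟩)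
    · exact ⟨a, Or.inl ha, hx⟩
    · exact ⟨a, Or.inr ha, hx⟩

lemma bigU_disj (hd : ∀ i j, i ≠ j → oDisj (Ωs i) (Ωs j)) {s t : Finset (Fin m)}
    (hst : Disjoint s t) : oDisj (bigU Ωs s) (bigU Ωs t) := by
  intro i
  simp only [bigU]
  rw [Finset.disjoint_biUnion_left]
  intro a ha
  rw [Finset.disjoint_biUnion_right]
  intro b hb
  exact hd a b (fun hab => Finset.disjoint_left.mp hst ha (hab ▸ hb)) i

lemma bigU_inter (hd : ∀ i j, i ≠ j → oDisj (Ωs i) (Ωs j)) (s t : Finset (Fin m)) :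
    oInter (bigU Ωs s) (bigU Ωs t) = bigU Ωs (s ∩ t) := by
  funext i
  ext x
  simp only [oInter, bigU, Finset.mem_inter, Finset.mem_biUnion]
  constructor
  · rintro ⟨⟨a, ha, hxa⟩, ⟨b, hb, hxb⟩⟩
    have hab : a = b := by
      by_contra hab
      exact Finset.disjoint_left.mp (hd a b hab i) hxa hxb
    exact ⟨a, ⟨ha, hab ▸ hb⟩, hxa⟩
  · rintro ⟨a, ⟨ha, ha'⟩, hxa⟩
    exact ⟨⟨a, ha, hxa⟩, ⟨a, ha', hxa⟩⟩

end bigUfacts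

variable {F : Species r} (E : CompOp F)

lemma eta_image_subset {Ω₁ Ω₂ : Obj r} (h : oDisj Ω₁ Ω₂) :
    E.η Ω₁ Ω₂ '' ((F.obj Ω₁ : Set ℕ) ×ˢ (F.obj Ω₂ : Set ℕ)) ⊆
      (F.obj (oUnion Ω₁ Ω₂) : Set ℕ) := by
  rintro z ⟨⟨x, y⟩, ⟨hx, hy⟩, rfl⟩
  exact E.mem_η h x hx y hy

lemma unit_mem {Ω₁ Ω₂ : Obj r} (h : oDisj Ω₁ Ω₂) {x y : ℕ}
    (hx : x ∈ F.obj Ω₁) (hy : y ∈ F.obj Ω₂) :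
    x ∈ E.η Ω₁ (oEmpty r) '' ((F.obj Ω₁ : Set ℕ) ×ˢ (F.obj (oEmpty r) : Set ℕ)) ∧
    y ∈ E.η (oEmpty r) Ω₂ '' ((F.obj (oEmpty r) : Set ℕ) ×ˢ (F.obj Ω₂ : Set ℕ)) := by
  have hD := E.D1 h h rfl
  rw [oInter_self, oInter_self, oInter_of_oDisj h, oInter_of_oDisj (oDisj_symm h),
    Set.inter_self] at hD
  have hz : E.η Ω₁ Ω₂ (x, y) ∈
      E.η Ω₁ Ω₂ '' ((F.obj Ω₁ : Set ℕ) ×ˢ (F.obj Ω₂ : Set ℕ)) :=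
    Set.mem_image_of_mem _ ⟨hx, hy⟩
  rw [hD] at hz
  obtain ⟨⟨x', y'⟩, ⟨hx', hy'⟩, heq⟩ := hz
  have hx'F : x' ∈ F.obj Ω₁ := by
    have := eta_image_subset E (oDisj_oEmpty_right Ω₁) hx'
    rwa [oUnion_oEmpty] at this
  have hy'F : y' ∈ F.obj Ω₂ := by
    have := eta_image_subset E (oDisj_oEmpty_left Ω₂) hy'
    rwa [oEmpty_oUnion] at this
  have hpq : ((x', y') : ℕ × ℕ) = (x, y) :=
    E.inj_η h (Set.mk_mem_prod (Finset.mem_coe.mpr hx'F) (Finset.mem_coe.mpr hy'F))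
      (Set.mk_mem_prod (Finset.mem_coe.mpr hx) (Finset.mem_coe.mpr hy)) heq
  injection hpq with ex ey
  exact ⟨ex ▸ hx', ey ▸ hy'⟩

lemma D1_bigU {m : ℕ} {Ωs : Fin m → Obj r} (hd : ∀ i j, i ≠ j → oDisj (Ωs i) (Ωs j))
    {s t I J : Finset (Fin m)} (hst : Disjoint s t) (hIJ : Disjoint I J)
    (hU : s ∪ t = I ∪ J) :
    E.η (bigU Ωs s) (bigU Ωs t) ''
        ((F.obj (bigU Ωs s) : Set ℕ) ×ˢ (F.obj (bigU Ωs t) : Set ℕ)) ∩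
      E.η (bigU Ωs I) (bigU Ωs J) ''
        ((F.obj (bigU Ωs I) : Set ℕ) ×ˢ (F.obj (bigU Ωs J) : Set ℕ)) =
    E.η (bigU Ωs s) (bigU Ωs t) ''
      ((E.η (bigU Ωs (s ∩ I)) (bigU Ωs (s ∩ J)) ''
          ((F.obj (bigU Ωs (s ∩ I)) : Set ℕ) ×ˢ (F.obj (bigU Ωs (s ∩ J)) : Set ℕ))) ×ˢ
        (E.η (bigU Ωs (t ∩ I)) (bigU Ωs (t ∩ J)) ''
          ((F.obj (bigU Ωs (t ∩ I)) : Set ℕ) ×ˢ (F.obj (bigU Ωs (t ∩ J)) : Set ℕ)))) := by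
  have hD := E.D1 (bigU_disj hd hst) (bigU_disj hd hIJ)
    (by rw [← bigU_union, ← bigU_union, hU])
  simpa only [bigU_inter hd] using hD

lemma brack_eq {m : ℕ} {Ωs : Fin m → Obj r} (hd : ∀ i j, i ≠ j → oDisj (Ωs i) (Ωs j))
    {s : Finset (Fin m)} {B : Set ℕ}
    (hB : Brack F E Ωs (fun Ω => (F.obj Ω : Set ℕ)) s B) :
    B = (F.obj (bigU Ωs s) : Set ℕ) ∩
      ⋂ (I : Finset (Fin m)) (J : Finset (Fin m)) (_ : Disjoint I J)
        (_ : I ∪ J = s) (_ : I.Nonempty) (_ : J.Nonempty),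
        E.η (bigU Ωs I) (bigU Ωs J) ''
          ((F.obj (bigU Ωs I) : Set ℕ) ×ˢ (F.obj (bigU Ωs J) : Set ℕ)) := by
  induction hB with
  | single i =>
    ext z
    simp only [Set.mem_inter_iff, Set.mem_iInter, bigU_singleton]
    constructor
    · intro hz
      refine ⟨hz, ?_⟩
      intro I J hIJ hun hI hJ
      exfalso
      obtain ⟨a, ha⟩ := hI
      obtain ⟨b, hb⟩ := hJ
      have ha' : a ∈ ({i} : Finset (Fin m)) := hun ▸ Finset.mem_union_left _ ha
      have hb' : b ∈ ({i} : Finset (Fin m)) := hun ▸ Finset.mem_union_right _ hb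
      rw [Finset.mem_singleton] at ha' hb'
      exact Finset.disjoint_left.mp hIJ ha (by rw [ha', ← hb']; exact hb)
    · exact fun hz => hz.1
  | @node s t B₁ B₂ hst hs ht hb1 hb2 ih1 ih2 =>
    have hds : oDisj (bigU Ωs s) (bigU Ωs t) := bigU_disj hd hst
    ext z
    constructor
    · rintro ⟨⟨x, y⟩, ⟨hx, hy⟩, rfl⟩
      rw [ih1] at hx
      rw [ih2] at hy
      obtain ⟨hxF, hxI⟩ := hx
      obtain ⟨hyF, hyI⟩ := hy
      simp only [Set.mem_iInter] at hxI hyI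
      refine ⟨?_, ?_⟩
      · rw [bigU_union]
        exact E.mem_η hds x hxF y hyF
      · simp only [Set.mem_iInter]
        intro I J hIJ hun hI hJ
        have hcomp : ∀ (u : Finset (Fin m)), u ⊆ I ∪ J → (u ∩ I) ∪ (u ∩ J) = u := by
          intro u hu
          rw [← Finset.inter_union_distrib_left, Finset.inter_eq_left.mpr hu]
        have hsub_s : s ⊆ I ∪ J := by rw [hun]; exact Finset.subset_union_left
        have hsub_t : t ⊆ I ∪ J := by rw [hun]; exact Finset.subset_union_right
        have hx' : x ∈ E.η (bigU Ωs (s ∩ I)) (bigU Ωs (s ∩ J)) ''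
            ((F.obj (bigU Ωs (s ∩ I)) : Set ℕ) ×ˢ (F.obj (bigU Ωs (s ∩ J)) : Set ℕ)) := by
          rcases (s ∩ J).eq_empty_or_nonempty with hsJ | hsJ
          · have hsI : s ∩ I = s := by
              have := hcomp s hsub_s
              rwa [hsJ, Finset.union_empty] at this
            rw [hsI, hsJ, bigU_empty]
            exact (unit_mem E hds hxF hyF).1
          rcases (s ∩ I).eq_empty_or_nonempty with hsI | hsI
          · have hsJ' : s ∩ J = s := by
              have := hcomp s hsub_s
              rwa [hsI, Finset.empty_union] at this
            rw [hsI, hsJ', bigU_empty]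
            exact (unit_mem E (oDisj_symm hds) hyF hxF).2
          · exact hxI (s ∩ I) (s ∩ J)
              (hIJ.mono Finset.inter_subset_right Finset.inter_subset_right)
              (hcomp s hsub_s) hsI hsJ
        have hy' : y ∈ E.η (bigU Ωs (t ∩ I)) (bigU Ωs (t ∩ J)) ''
            ((F.obj (bigU Ωs (t ∩ I)) : Set ℕ) ×ˢ (F.obj (bigU Ωs (t ∩ J)) : Set ℕ)) := by
          rcases (t ∩ J).eq_empty_or_nonempty with htJ | htJ
          · have htI : t ∩ I = t := by
              have := hcomp t hsub_t
              rwa [htJ, Finset.union_empty] at this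
            rw [htI, htJ, bigU_empty]
            exact (unit_mem E (oDisj_symm hds) hyF hxF).1
          rcases (t ∩ I).eq_empty_or_nonempty with htI | htI
          · have htJ' : t ∩ J = t := by
              have := hcomp t hsub_t
              rwa [htI, Finset.empty_union] at this
            rw [htI, htJ', bigU_empty]
            exact (unit_mem E hds hxF hyF).2
          · exact hyI (t ∩ I) (t ∩ J)
              (hIJ.mono Finset.inter_subset_right Finset.inter_subset_right)
              (hcomp t hsub_t) htI htJ
        have hD := D1_bigU E hd hst hIJ hun.symm
        have hmem : E.η (bigU Ωs s) (bigU Ωs t) (x, y) ∈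
            E.η (bigU Ωs s) (bigU Ωs t) ''
              ((F.obj (bigU Ωs s) : Set ℕ) ×ˢ (F.obj (bigU Ωs t) : Set ℕ)) ∩
            E.η (bigU Ωs I) (bigU Ωs J) ''
              ((F.obj (bigU Ωs I) : Set ℕ) ×ˢ (F.obj (bigU Ωs J) : Set ℕ)) := by
          rw [hD]
          exact Set.mem_image_of_mem _ ⟨hx', hy'⟩
        exact hmem.2
    · rintro ⟨hzF, hzI⟩
      simp only [Set.mem_iInter] at hzI
      have hz0 := hzI s t hst rfl hs ht
      obtain ⟨⟨x, y⟩, ⟨hxF, hyF⟩, hzeq⟩ := hz0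
      subst hzeq
      have hxB : x ∈ B₁ := by
        rw [ih1]
        refine ⟨hxF, ?_⟩
        simp only [Set.mem_iInter]
        intro I₀ J₀ h0 hun0 hI0 hJ0
        have hIsub : I₀ ⊆ s := hun0 ▸ Finset.subset_union_left
        have hJsub : J₀ ⊆ s := hun0 ▸ Finset.subset_union_right
        have hd0 : Disjoint I₀ (J₀ ∪ t) := by
          rw [Finset.disjoint_union_right]
          exact ⟨h0, hst.mono_left hIsub⟩
        have hun' : s ∪ t = I₀ ∪ (J₀ ∪ t) := by
          rw [← Finset.union_assoc, hun0]
        obtain ⟨b, hb⟩ := ht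
        have hz1 := hzI I₀ (J₀ ∪ t) hd0 hun'.symm hI0 ⟨b, Finset.mem_union_right _ hb⟩
        have hD := D1_bigU E hd hst hd0 hun'
        have hmem : E.η (bigU Ωs s) (bigU Ωs t) (x, y) ∈
            E.η (bigU Ωs s) (bigU Ωs t) ''
              ((F.obj (bigU Ωs s) : Set ℕ) ×ˢ (F.obj (bigU Ωs t) : Set ℕ)) ∩
            E.η (bigU Ωs I₀) (bigU Ωs (J₀ ∪ t)) ''
              ((F.obj (bigU Ωs I₀) : Set ℕ) ×ˢ (F.obj (bigU Ωs (J₀ ∪ t)) : Set ℕ)) :=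
          ⟨Set.mem_image_of_mem _ ⟨hxF, hyF⟩, hz1⟩
        rw [hD] at hmem
        obtain ⟨⟨x', y'⟩, ⟨hx', hy'⟩, heq⟩ := hmem
        have e1 : s ∩ I₀ = I₀ := Finset.inter_eq_right.mpr hIsub
        have e2 : s ∩ (J₀ ∪ t) = J₀ := by
          rw [Finset.inter_union_distrib_left, Finset.inter_eq_right.mpr hJsub,
            Finset.disjoint_iff_inter_eq_empty.mp hst, Finset.union_empty]
        have e3 : t ∩ I₀ = ∅ :=
          Finset.disjoint_iff_inter_eq_empty.mp ((hst.symm).mono_right hIsub)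
        have e4 : t ∩ (J₀ ∪ t) = t :=
          Finset.inter_eq_left.mpr Finset.subset_union_right
        rw [e1, e2] at hx'
        rw [e3, e4, bigU_empty] at hy'
        have hx'F : x' ∈ F.obj (bigU Ωs s) := by
          have := eta_image_subset E (bigU_disj hd h0) hx'
          rwa [← bigU_union, hun0] at this
        have hy'F : y' ∈ F.obj (bigU Ωs t) := by
          have := eta_image_subset E (oDisj_oEmpty_left _) hy'
          rwa [oEmpty_oUnion] at this
        have hpq : ((x', y') : ℕ × ℕ) = (x, y) :=
          E.inj_η hds (Set.mk_mem_prod (Finset.mem_coe.mpr hx'F) (Finset.mem_coe.mpr hy'F))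
            (Set.mk_mem_prod (Finset.mem_coe.mpr hxF) (Finset.mem_coe.mpr hyF)) heq
        injection hpq with ex ey
        exact ex ▸ hx'
      have hyB : y ∈ B₂ := by
        rw [ih2]
        refine ⟨hyF, ?_⟩
        simp only [Set.mem_iInter]
        intro I₁ J₁ h1 hun1 hI1 hJ1
        have hIsub : I₁ ⊆ t := hun1 ▸ Finset.subset_union_left
        have hJsub : J₁ ⊆ t := hun1 ▸ Finset.subset_union_right
        have hd1 : Disjoint (s ∪ I₁) J₁ := by
          rw [Finset.disjoint_union_left]
          exact ⟨hst.mono_right hJsub, h1⟩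
        have hun' : s ∪ t = (s ∪ I₁) ∪ J₁ := by
          rw [Finset.union_assoc, hun1]
        obtain ⟨a, ha⟩ := hs
        have hz1 := hzI (s ∪ I₁) J₁ hd1 hun'.symm ⟨a, Finset.mem_union_left _ ha⟩ hJ1
        have hD := D1_bigU E hd hst hd1 hun'
        have hmem : E.η (bigU Ωs s) (bigU Ωs t) (x, y) ∈
            E.η (bigU Ωs s) (bigU Ωs t) ''
              ((F.obj (bigU Ωs s) : Set ℕ) ×ˢ (F.obj (bigU Ωs t) : Set ℕ)) ∩
            E.η (bigU Ωs (s ∪ I₁)) (bigU Ωs J₁) ''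
              ((F.obj (bigU Ωs (s ∪ I₁)) : Set ℕ) ×ˢ (F.obj (bigU Ωs J₁) : Set ℕ)) :=
          ⟨Set.mem_image_of_mem _ ⟨hxF, hyF⟩, hz1⟩
        rw [hD] at hmem
        obtain ⟨⟨x', y'⟩, ⟨hx', hy'⟩, heq⟩ := hmem
        have e1 : s ∩ (s ∪ I₁) = s := Finset.inter_eq_left.mpr Finset.subset_union_left
        have e2 : s ∩ J₁ = ∅ :=
          Finset.disjoint_iff_inter_eq_empty.mp (hst.mono_right hJsub)
        have e3 : t ∩ (s ∪ I₁) = I₁ := by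
          rw [Finset.inter_union_distrib_left, Finset.inter_eq_right.mpr hIsub,
            Finset.disjoint_iff_inter_eq_empty.mp hst.symm, Finset.empty_union]
        have e4 : t ∩ J₁ = J₁ := Finset.inter_eq_right.mpr hJsub
        rw [e1, e2, bigU_empty] at hx'
        rw [e3, e4] at hy'
        have hx'F : x' ∈ F.obj (bigU Ωs s) := by
          have := eta_image_subset E (oDisj_oEmpty_right _) hx'
          rwa [oUnion_oEmpty] at this
        have hy'F : y' ∈ F.obj (bigU Ωs t) := by
          have := eta_image_subset E (bigU_disj hd h1) hy'
          rwa [← bigU_union, hun1] at this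
        have hpq : ((x', y') : ℕ × ℕ) = (x, y) :=
          E.inj_η hds (Set.mk_mem_prod (Finset.mem_coe.mpr hx'F) (Finset.mem_coe.mpr hy'F))
            (Set.mk_mem_prod (Finset.mem_coe.mpr hxF) (Finset.mem_coe.mpr hyF)) heq
        injection hpq with ex ey
        exact ey ▸ hy'
      exact Set.mem_image_of_mem _ ⟨hxB, hyB⟩

end PermutabilityAux

/-- `m`-Permutability for `(F, Η)`: every `Η`-bracketing of `F[Ω₁], …, F[Ω_m]`
equals the intersection over all ordered pairs `(I, J)` of nonempty disjoint sets
with `I ∪ J = {1, …, m}` of the sets `η(F[Ω_I] × F[Ω_J])`; in particular all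
`Η`-bracketings are equal to each other. -/
theorem stmt6 {r : ℕ} (hr : 0 < r) (F : Species r) (E : CompOp F)
    (hF : ∃ Ω : Obj r, (F.obj Ω).Nonempty)
    (m : ℕ) (hm : 2 ≤ m) (Ωs : Fin m → Obj r)
    (hd : ∀ i j, i ≠ j → oDisj (Ωs i) (Ωs j))
    (B : Set ℕ) (hB : Brack F E Ωs (fun Ω => (F.obj Ω : Set ℕ)) Finset.univ B) :
    B = ⋂ (I : Finset (Fin m)) (J : Finset (Fin m)) (_ : Disjoint I J)
          (_ : I ∪ J = Finset.univ) (_ : I.Nonempty) (_ : J.Nonempty),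
        E.η (bigU Ωs I) (bigU Ωs J) ''
          ((F.obj (bigU Ωs I) : Set ℕ) ×ˢ (F.obj (bigU Ωs J) : Set ℕ)) := by
  rw [brack_eq E hd hB]
  refine Set.eq_of_subset_of_subset Set.inter_subset_right fun z hz => ⟨?_, hz⟩
  set i0 : Fin m := ⟨0, by omega⟩ with hi0
  have hdisj : Disjoint ({i0} : Finset (Fin m)) (Finset.univ \ {i0}) :=
    Finset.disjoint_sdiff
  have hun : ({i0} : Finset (Fin m)) ∪ (Finset.univ \ {i0}) = Finset.univ :=
    Finset.union_sdiff_of_subset (Finset.subset_univ _)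
  have hJ0 : (Finset.univ \ ({i0} : Finset (Fin m))).Nonempty := by
    rw [← Finset.card_pos, Finset.card_sdiff_of_subset (Finset.subset_univ _),
      Finset.card_singleton, Finset.card_univ, Fintype.card_fin]
    omega
  simp only [Set.mem_iInter] at hz
  have hz0 := hz {i0} (Finset.univ \ {i0}) hdisj hun ⟨i0, Finset.mem_singleton_self _⟩ hJ0
  have := eta_image_subset E (bigU_disj hd hdisj) hz0
  rwa [← bigU_union, hun] at this

end
end

section
/- (m-Permutability for (F_Η,Η)) Let F be an r-sort species admitting a composition operator Η. If Ω1,...,Ωm are pairwise componentwise-disjoint r-tuples of finite sets, then all Η-bracketings of the sets of indecomposables F_Η[Ω1],...,F_Η[Ωm] are equal to each other as subsets of F[Ω1⨿···⨿Ωm]. -/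
open scoped Classical

noncomputable section

variable {r : ℕ}

namespace Stmt10Aux

variable {r : ℕ}

lemma oUnion_empty_left (A : Obj r) : oUnion (oEmpty r) A = A := by
  funext i; simp [oUnion, oEmpty]

lemma oUnion_empty_right (A : Obj r) : oUnion A (oEmpty r) = A := by
  funext i; simp [oUnion, oEmpty]

lemma oDisj_empty_left (A : Obj r) : oDisj (oEmpty r) A := fun i => by
  simp [oEmpty]

lemma oDisj_empty_right (A : Obj r) : oDisj A (oEmpty r) := fun i => by
  simp [oEmpty]

lemma oUnion_ne_empty_left {C D : Obj r} (hC : C ≠ oEmpty r) :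
    oUnion C D ≠ oEmpty r := by
  intro h; apply hC; funext i
  have h' := congrFun h i
  simp only [oUnion, oEmpty] at h' ⊢
  exact (Finset.union_eq_empty.mp h').1

section BigU

variable {ι : Type} [DecidableEq ι] (Ωs : ι → Obj r)

lemma bigU_empty : bigU Ωs (∅ : Finset ι) = oEmpty r := by
  funext i; simp [bigU, oEmpty]

lemma bigU_singleton (j : ι) : bigU Ωs {j} = Ωs j := by
  funext i; simp [bigU]

lemma bigU_union (s t : Finset ι) :
    bigU Ωs (s ∪ t) = oUnion (bigU Ωs s) (bigU Ωs t) := by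
  funext i; ext a
  simp only [bigU, oUnion, Finset.mem_biUnion, Finset.mem_union]
  constructor
  · rintro ⟨j, hj | hj, haj⟩
    · exact Or.inl ⟨j, hj, haj⟩
    · exact Or.inr ⟨j, hj, haj⟩
  · rintro (⟨j, hj, haj⟩ | ⟨j, hj, haj⟩)
    · exact ⟨j, Or.inl hj, haj⟩
    · exact ⟨j, Or.inr hj, haj⟩

lemma bigU_disj (hd : ∀ i j, i ≠ j → oDisj (Ωs i) (Ωs j)) {s t : Finset ι} (hst : Disjoint s t) :
    oDisj (bigU Ωs s) (bigU Ωs t) := by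
  intro i
  simp only [bigU]
  rw [Finset.disjoint_biUnion_left]
  intro a ha
  rw [Finset.disjoint_biUnion_right]
  intro b hb
  exact hd a b (fun h => (Finset.disjoint_left.mp hst ha (h ▸ hb))) i

lemma bigU_inter (hd : ∀ i j, i ≠ j → oDisj (Ωs i) (Ωs j)) (u v : Finset ι) :
    oInter (bigU Ωs u) (bigU Ωs v) = bigU Ωs (u ∩ v) := by
  funext i; ext a
  simp only [oInter, bigU, Finset.mem_inter, Finset.mem_biUnion]
  constructor
  · rintro ⟨⟨j, hj, haj⟩, ⟨k, hk, hak⟩⟩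
    have hjk : j = k := by
      by_contra hne
      exact Finset.disjoint_left.mp (hd j k hne i) haj hak
    exact ⟨j, ⟨hj, hjk ▸ hk⟩, haj⟩
  · rintro ⟨j, hj, haj⟩
    exact ⟨⟨j, hj.1, haj⟩, ⟨j, hj.2, haj⟩⟩

lemma idx_mem_of_sub (hd : ∀ i j, i ≠ j → oDisj (Ωs i) (Ωs j)) (hne : ∀ i, Ωs i ≠ oEmpty r) {i : ι} {w : Finset ι}
    (hsub : oSub (Ωs i) (bigU Ωs w)) : i ∈ w := by
  have hex : ∃ j a, a ∈ Ωs i j := by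
    by_contra h
    push_neg at h
    apply hne i; funext j; ext a
    simp only [oEmpty, Finset.notMem_empty, iff_false]
    exact h j a
  obtain ⟨j, a, ha⟩ := hex
  have hmem := hsub j ha
  simp only [bigU, Finset.mem_biUnion] at hmem
  obtain ⟨k, hk, hak⟩ := hmem
  have hik : i = k := by
    by_contra hne'
    exact Finset.disjoint_left.mp (hd i k hne' j) ha hak
  exact hik ▸ hk

end BigU

section Img

variable (F : Species r) (E : CompOp F)

def img (C D : Obj r) : Set ℕ :=
  E.η C D '' ((F.obj C : Set ℕ) ×ˢ (F.obj D : Set ℕ))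

lemma img_subset_obj {C D : Obj r} (h : oDisj C D) :
    img F E C D ⊆ (F.obj (oUnion C D) : Set ℕ) := by
  rintro z ⟨⟨x, y⟩, ⟨hx, hy⟩, rfl⟩
  exact E.mem_η h x hx y hy

lemma img_empty_left (hE0 : (F.obj (oEmpty r)).Nonempty) (A : Obj r) :
    img F E (oEmpty r) A = (F.obj A : Set ℕ) := by
  classical
  apply Set.Subset.antisymm
  · have h := img_subset_obj F E (oDisj_empty_left A)
    rwa [oUnion_empty_left] at h
  · set f : ℕ × ℕ → ℕ := E.η (oEmpty r) A with hf
    have hinj : Set.InjOn f ((F.obj (oEmpty r) ×ˢ F.obj A : Finset (ℕ × ℕ)) : Set (ℕ × ℕ)) := by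
      rw [Finset.coe_product]; exact E.inj_η (oDisj_empty_left A)
    have hsub : (F.obj (oEmpty r) ×ˢ F.obj A).image f ⊆ F.obj A := by
      intro z hz
      rw [Finset.mem_image] at hz
      obtain ⟨⟨x, y⟩, hxy, rfl⟩ := hz
      rw [Finset.mem_product] at hxy
      have h := E.mem_η (oDisj_empty_left A) x hxy.1 y hxy.2
      rwa [oUnion_empty_left] at h
    have hcard : (F.obj A).card ≤ ((F.obj (oEmpty r) ×ˢ F.obj A).image f).card := by
      rw [Finset.card_image_of_injOn hinj, Finset.card_product]
      have h1 : 1 ≤ (F.obj (oEmpty r)).card := Finset.card_pos.mpr hE0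
      calc (F.obj A).card = 1 * (F.obj A).card := (one_mul _).symm
        _ ≤ (F.obj (oEmpty r)).card * (F.obj A).card := Nat.mul_le_mul_right _ h1
    have heq := Finset.eq_of_subset_of_card_le hsub hcard
    intro z hz
    have hz' : z ∈ (F.obj (oEmpty r) ×ˢ F.obj A).image f := by
      rw [heq]; exact hz
    rw [Finset.mem_image] at hz'
    obtain ⟨⟨x, y⟩, hxy, rfl⟩ := hz'
    rw [Finset.mem_product] at hxy
    exact ⟨(x, y), ⟨hxy.1, hxy.2⟩, rfl⟩

lemma img_empty_right (hE0 : (F.obj (oEmpty r)).Nonempty) (A : Obj r) :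
    img F E A (oEmpty r) = (F.obj A : Set ℕ) := by
  classical
  apply Set.Subset.antisymm
  · have h := img_subset_obj F E (oDisj_empty_right A)
    rwa [oUnion_empty_right] at h
  · set f : ℕ × ℕ → ℕ := E.η A (oEmpty r) with hf
    have hinj : Set.InjOn f ((F.obj A ×ˢ F.obj (oEmpty r) : Finset (ℕ × ℕ)) : Set (ℕ × ℕ)) := by
      rw [Finset.coe_product]; exact E.inj_η (oDisj_empty_right A)
    have hsub : (F.obj A ×ˢ F.obj (oEmpty r)).image f ⊆ F.obj A := by
      intro z hz
      rw [Finset.mem_image] at hz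
      obtain ⟨⟨x, y⟩, hxy, rfl⟩ := hz
      rw [Finset.mem_product] at hxy
      have h := E.mem_η (oDisj_empty_right A) x hxy.1 y hxy.2
      rwa [oUnion_empty_right] at h
    have hcard : (F.obj A).card ≤ ((F.obj A ×ˢ F.obj (oEmpty r)).image f).card := by
      rw [Finset.card_image_of_injOn hinj, Finset.card_product]
      have h1 : 1 ≤ (F.obj (oEmpty r)).card := Finset.card_pos.mpr hE0
      calc (F.obj A).card = (F.obj A).card * 1 := (mul_one _).symm
        _ ≤ (F.obj A).card * (F.obj (oEmpty r)).card := Nat.mul_le_mul_left _ h1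
    have heq := Finset.eq_of_subset_of_card_le hsub hcard
    intro z hz
    have hz' : z ∈ (F.obj A ×ˢ F.obj (oEmpty r)).image f := by
      rw [heq]; exact hz
    rw [Finset.mem_image] at hz'
    obtain ⟨⟨x, y⟩, hxy, rfl⟩ := hz'
    rw [Finset.mem_product] at hxy
    exact ⟨(x, y), ⟨hxy.1, hxy.2⟩, rfl⟩

lemma img_eq_empty_of_no_unit (hE0 : F.obj (oEmpty r) = ∅) {A B : Obj r}
    (hAB : oDisj A B) : img F E A B = ∅ := by
  have hIAB : oInter A B = oEmpty r := by
    funext i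
    exact Finset.disjoint_iff_inter_eq_empty.mp (hAB i)
  have hIBA : oInter B A = oEmpty r := by
    funext i
    exact Finset.disjoint_iff_inter_eq_empty.mp (hAB i).symm
  have hD := E.D1 hAB hAB rfl
  rw [hIAB, hIBA, hE0] at hD
  simp only [Finset.coe_empty, Set.prod_empty, Set.empty_prod, Set.image_empty,
    Set.inter_self] at hD
  exact hD

end Img

lemma oUnion_comm (A B : Obj r) : oUnion A B = oUnion B A := by
  funext i; simp [oUnion, Finset.union_comm]

lemma oInter_disj_of_right {Ω C D : Obj r} (hCD : oDisj C D) :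
    oDisj (oInter Ω C) (oInter Ω D) := fun i =>
  Disjoint.mono Finset.inter_subset_right Finset.inter_subset_right (hCD i)

lemma oUnion_oInter_eq {Ω₁ Ω₂ C D : Obj r} (hu : oUnion Ω₁ Ω₂ = oUnion C D) :
    oUnion (oInter Ω₁ C) (oInter Ω₁ D) = Ω₁ := by
  funext i
  have hcup := congrFun hu i
  simp only [oUnion, oInter] at hcup ⊢
  rw [← Finset.inter_union_distrib_left]
  apply Finset.inter_eq_left.mpr
  intro a ha
  rw [← hcup]
  exact Finset.mem_union_left _ ha

lemma eta_refine (F : Species r) (E : CompOp F) {Ω₁ Ω₂ C D : Obj r}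
    (h12 : oDisj Ω₁ Ω₂) (hCD : oDisj C D)
    (hu : oUnion Ω₁ Ω₂ = oUnion C D) {x y : ℕ} (hx : x ∈ F.obj Ω₁) (hy : y ∈ F.obj Ω₂)
    (hz : E.η Ω₁ Ω₂ (x, y) ∈ img F E C D) :
    x ∈ img F E (oInter Ω₁ C) (oInter Ω₁ D) ∧ y ∈ img F E (oInter Ω₂ C) (oInter Ω₂ D) := by
  have hD := E.D1 h12 hCD hu
  have hzmem : E.η Ω₁ Ω₂ (x, y) ∈ E.η Ω₁ Ω₂ '' ((F.obj Ω₁ : Set ℕ) ×ˢ (F.obj Ω₂ : Set ℕ)) :=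
    ⟨(x, y), ⟨hx, hy⟩, rfl⟩
  have hz2 : E.η Ω₁ Ω₂ (x, y) ∈
      E.η Ω₁ Ω₂ '' ((E.η (oInter Ω₁ C) (oInter Ω₁ D) ''
          ((F.obj (oInter Ω₁ C) : Set ℕ) ×ˢ (F.obj (oInter Ω₁ D) : Set ℕ))) ×ˢ
        (E.η (oInter Ω₂ C) (oInter Ω₂ D) ''
          ((F.obj (oInter Ω₂ C) : Set ℕ) ×ˢ (F.obj (oInter Ω₂ D) : Set ℕ)))) := by
    rw [← hD]; exact ⟨hzmem, hz⟩
  obtain ⟨⟨α, β⟩, ⟨hα, hβ⟩, heq⟩ := hz2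
  have h1 : oUnion (oInter Ω₁ C) (oInter Ω₁ D) = Ω₁ := oUnion_oInter_eq hu
  have h2 : oUnion (oInter Ω₂ C) (oInter Ω₂ D) = Ω₂ :=
    oUnion_oInter_eq ((oUnion_comm Ω₂ Ω₁).trans hu)
  have hαF : α ∈ F.obj Ω₁ := by
    have h := img_subset_obj F E (oInter_disj_of_right hCD) hα
    rwa [h1] at h
  have hβF : β ∈ F.obj Ω₂ := by
    have h := img_subset_obj F E (oInter_disj_of_right hCD) hβ
    rwa [h2] at h
  have hm1 : ((α, β) : ℕ × ℕ) ∈ ((F.obj Ω₁ : Set ℕ) ×ˢ (F.obj Ω₂ : Set ℕ)) := ⟨hαF, hβF⟩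
  have hm2 : ((x, y) : ℕ × ℕ) ∈ ((F.obj Ω₁ : Set ℕ) ×ˢ (F.obj Ω₂ : Set ℕ)) := ⟨hx, hy⟩
  have hpair : ((α, β) : ℕ × ℕ) = (x, y) := E.inj_η h12 hm1 hm2 heq
  have hxα : α = x := congrArg Prod.fst hpair
  have hyβ : β = y := congrArg Prod.snd hpair
  subst hxα; subst hyβ
  exact ⟨hα, hβ⟩

lemma exchange (F : Species r) (E : CompOp F) {A B C D : Obj r}
    (hAB : oDisj A B) (hCD : oDisj C D) (hAC : oDisj A C) (hAD : oDisj A D)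
    (hBC : oDisj B C) (hBD : oDisj B D)
    {p q u v : ℕ} (hp : p ∈ F.obj A) (hq : q ∈ F.obj B)
    (hu : u ∈ F.obj C) (hv : v ∈ F.obj D) :
    E.η (oUnion A B) (oUnion C D) (E.η A B (p, q), E.η C D (u, v)) ∈
      img F E (oUnion A C) (oUnion B D) := by
  have hd1 : oDisj (oUnion A B) (oUnion C D) := by
    intro i
    simp only [oUnion, Finset.disjoint_union_left, Finset.disjoint_union_right]
    exact ⟨⟨hAC i, hBC i⟩, hAD i, hBD i⟩
  have hd2 : oDisj (oUnion A C) (oUnion B D) := by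
    intro i
    simp only [oUnion, Finset.disjoint_union_left, Finset.disjoint_union_right]
    exact ⟨⟨hAB i, (hBC i).symm⟩, hAD i, hCD i⟩
  have huu : oUnion (oUnion A B) (oUnion C D) = oUnion (oUnion A C) (oUnion B D) := by
    funext i
    ext a
    simp only [oUnion, Finset.mem_union]
    tauto
  have e1 : oInter (oUnion A B) (oUnion A C) = A := by
    funext i; ext a
    simp only [oInter, oUnion, Finset.mem_inter, Finset.mem_union]
    have h1 := Finset.disjoint_left.mp (hBC i)
    constructor
    · rintro ⟨h | h, h' | h'⟩
      · exact h
      · exact h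
      · exact h'
      · exact absurd h' (fun hc => h1 h hc)
    · intro h; exact ⟨Or.inl h, Or.inl h⟩
  have e2 : oInter (oUnion A B) (oUnion B D) = B := by
    funext i; ext a
    simp only [oInter, oUnion, Finset.mem_inter, Finset.mem_union]
    have h1 := Finset.disjoint_left.mp (hAD i)
    constructor
    · rintro ⟨h | h, h' | h'⟩
      · exact h'
      · exact absurd h' (fun hc => h1 h hc)
      · exact h
      · exact h
    · intro h; exact ⟨Or.inr h, Or.inl h⟩
  have e3 : oInter (oUnion C D) (oUnion A C) = C := by
    funext i; ext a
    simp only [oInter, oUnion, Finset.mem_inter, Finset.mem_union]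
    have h1 := Finset.disjoint_left.mp (hAD i)
    constructor
    · rintro ⟨h | h, h' | h'⟩
      · exact h
      · exact h
      · exact absurd h (fun hc => h1 h' hc)
      · exact h'
    · intro h; exact ⟨Or.inl h, Or.inr h⟩
  have e4 : oInter (oUnion C D) (oUnion B D) = D := by
    funext i; ext a
    simp only [oInter, oUnion, Finset.mem_inter, Finset.mem_union]
    have h1 := Finset.disjoint_left.mp (hBC i)
    constructor
    · rintro ⟨h | h, h' | h'⟩
      · exact absurd h (fun hc => h1 h' hc)
      · exact h'
      · exact h
      · exact h
    · intro h; exact ⟨Or.inr h, Or.inr h⟩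
  have hD := E.D1 hd1 hd2 huu
  rw [e1, e2, e3, e4] at hD
  have hzR : E.η (oUnion A B) (oUnion C D) (E.η A B (p, q), E.η C D (u, v)) ∈
      E.η (oUnion A B) (oUnion C D) ''
        ((E.η A B '' ((F.obj A : Set ℕ) ×ˢ (F.obj B : Set ℕ))) ×ˢ
         (E.η C D '' ((F.obj C : Set ℕ) ×ˢ (F.obj D : Set ℕ)))) :=
    ⟨(E.η A B (p, q), E.η C D (u, v)), ⟨⟨(p, q), ⟨hp, hq⟩, rfl⟩, ⟨(u, v), ⟨hu, hv⟩, rfl⟩⟩, rfl⟩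
  rw [← hD] at hzR
  exact hzR.2



end Stmt10Aux
namespace Stmt10Aux

section Main

variable {r : ℕ} {m : ℕ}

def Zf (F : Species r) (E : CompOp F) (Ωs : Fin m → Obj r) (s : Finset (Fin m)) : Set ℕ :=
  { z | z ∈ F.obj (bigU Ωs s) ∧
    (∀ u ⊆ s, u.Nonempty → (s \ u).Nonempty →
      z ∈ img F E (bigU Ωs u) (bigU Ωs (s \ u))) ∧
    (∀ C D : Obj r, oDisj C D → oUnion C D = bigU Ωs s → C ≠ oEmpty r →
      D ≠ oEmpty r → z ∈ img F E C D →
      ∃ u, u ⊆ s ∧ C = bigU Ωs u ∧ D = bigU Ωs (s \ u)) }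

variable (F : Species r) (E : CompOp F) (Ωs : Fin m → Obj r)

lemma bigU_mono {u v : Finset (Fin m)} (h : u ⊆ v) : oSub (bigU Ωs u) (bigU Ωs v) := by
  intro i a ha
  simp only [bigU, Finset.mem_biUnion] at ha ⊢
  obtain ⟨j, hj, haj⟩ := ha
  exact ⟨j, h hj, haj⟩

lemma bigU_ne_empty (hne : ∀ i, Ωs i ≠ oEmpty r) {s : Finset (Fin m)}
    (hs : s.Nonempty) : bigU Ωs s ≠ oEmpty r := by
  obtain ⟨i, hi⟩ := hs
  intro h
  apply hne i
  funext j; ext a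
  simp only [oEmpty, Finset.notMem_empty, iff_false]
  intro ha
  have : a ∈ (bigU Ωs s) j := by
    simp only [bigU, Finset.mem_biUnion]; exact ⟨i, hi, ha⟩
  rw [h] at this
  simp [oEmpty] at this

lemma zf_split (hE0 : (F.obj (oEmpty r)).Nonempty) {s u : Finset (Fin m)}
    (hu : u ⊆ s) {x : ℕ} (hx : x ∈ Zf F E Ωs s) :
    x ∈ img F E (bigU Ωs u) (bigU Ωs (s \ u)) := by
  rcases u.eq_empty_or_nonempty with h | h
  · subst h
    rw [bigU_empty, Finset.sdiff_empty, img_empty_left F E hE0]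
    exact hx.1
  rcases (s \ u).eq_empty_or_nonempty with h' | h'
  · have husu : u = s := by
      apply Finset.Subset.antisymm hu
      intro a ha
      by_contra hna
      have hmem : a ∈ s \ u := Finset.mem_sdiff.mpr ⟨ha, hna⟩
      rw [h'] at hmem
      exact Finset.notMem_empty a hmem
    subst husu
    rw [Finset.sdiff_self, bigU_empty, img_empty_right F E hE0]
    exact hx.1
  · exact hx.2.1 u hu h h'

lemma zf_split_inter (hd : ∀ i j, i ≠ j → oDisj (Ωs i) (Ωs j))
    {s : Finset (Fin m)} {x : ℕ} (hx : x ∈ Zf F E Ωs s)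
    {C D : Obj r} (hCD : oDisj C D) (hsub : oSub (bigU Ωs s) (oUnion C D))
    (hxim : x ∈ img F E (oInter (bigU Ωs s) C) (oInter (bigU Ωs s) D)) :
    ∃ u, u ⊆ s ∧ oInter (bigU Ωs s) C = bigU Ωs u ∧
      oInter (bigU Ωs s) D = bigU Ωs (s \ u) := by
  have hPQ : oUnion (oInter (bigU Ωs s) C) (oInter (bigU Ωs s) D) = bigU Ωs s := by
    funext i
    simp only [oUnion, oInter]
    rw [← Finset.inter_union_distrib_left]
    exact Finset.inter_eq_left.mpr (hsub i)
  by_cases hP : oInter (bigU Ωs s) C = oEmpty r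
  · refine ⟨∅, Finset.empty_subset s, by rw [bigU_empty]; exact hP, ?_⟩
    rw [Finset.sdiff_empty]
    rw [hP, oUnion_empty_left] at hPQ
    exact hPQ
  by_cases hQ : oInter (bigU Ωs s) D = oEmpty r
  · refine ⟨s, Finset.Subset.refl s, ?_, ?_⟩
    · rw [hQ, oUnion_empty_right] at hPQ
      exact hPQ
    · rw [Finset.sdiff_self, bigU_empty]
      exact hQ
  · exact hx.2.2 _ _ (oInter_disj_of_right hCD) hPQ hP hQ hxim

lemma brack_eq_Zf (hd : ∀ i j, i ≠ j → oDisj (Ωs i) (Ωs j))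
    (hne : ∀ i, Ωs i ≠ oEmpty r) (hE0 : (F.obj (oEmpty r)).Nonempty)
    {s : Finset (Fin m)} {B : Set ℕ}
    (hB : Brack F E Ωs (indec F E) s B) : B = Zf F E Ωs s := by
  induction hB with
  | single i =>
      ext z
      simp only [indec, if_neg (hne i)]
      constructor
      · rintro ⟨hzF, hzn⟩
        refine ⟨by rw [bigU_singleton]; exact hzF, ?_, ?_⟩
        · intro u hu h1 h2
          exfalso
          rcases Finset.subset_singleton_iff.mp hu with h | h
          · subst h; exact Finset.not_nonempty_empty h1
          · subst h
            rw [Finset.sdiff_self] at h2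
            exact Finset.not_nonempty_empty h2
        · intro C D hCD hUn hC hD hzCD
          exfalso
          apply hzn
          simp only [Set.mem_iUnion]
          exact ⟨(C, D), hCD, hC, hD, by rw [hUn, bigU_singleton], hzCD⟩
      · rintro ⟨h0, h1, h3⟩
        refine ⟨by rw [← bigU_singleton Ωs i]; exact h0, ?_⟩
        intro hzin
        simp only [Set.mem_iUnion] at hzin
        obtain ⟨⟨C, D⟩, hCD, hC, hD, hUn, hzim⟩ := hzin
        obtain ⟨u, hu, hCeq, hDeq⟩ :=
          h3 C D hCD (by rw [hUn, ← bigU_singleton Ωs i]) hC hD hzim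
        rcases Finset.subset_singleton_iff.mp hu with h | h
        · subst h
          rw [bigU_empty] at hCeq
          exact hC hCeq
        · subst h
          rw [Finset.sdiff_self, bigU_empty] at hDeq
          exact hD hDeq
  | @node s t B₁ B₂ hst hsn htn hB1 hB2 ih1 ih2 =>
      rw [ih1, ih2]
      have hdisj_st : oDisj (bigU Ωs s) (bigU Ωs t) := bigU_disj Ωs hd hst
      have hUS : bigU Ωs (s ∪ t) = oUnion (bigU Ωs s) (bigU Ωs t) := bigU_union Ωs s t
      ext z
      constructor
      · rintro ⟨⟨x, y⟩, ⟨hx, hy⟩, rfl⟩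
        refine ⟨?_, ?_, ?_⟩
        · rw [hUS]
          exact E.mem_η hdisj_st x hx.1 y hy.1
        · intro u hu h1 h2
          have hxs : x ∈ img F E (bigU Ωs (s ∩ u)) (bigU Ωs (s \ u)) := by
            have h := zf_split F E Ωs hE0 (s := s) (u := s ∩ u) Finset.inter_subset_left hx
            rwa [Finset.sdiff_inter_self_left] at h
          have hys : y ∈ img F E (bigU Ωs (t ∩ u)) (bigU Ωs (t \ u)) := by
            have h := zf_split F E Ωs hE0 (s := t) (u := t ∩ u) Finset.inter_subset_left hy
            rwa [Finset.sdiff_inter_self_left] at h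
          obtain ⟨⟨p, q⟩, ⟨hp, hq⟩, hxeq⟩ := hxs
          obtain ⟨⟨a, b⟩, ⟨ha, hb⟩, hyeq⟩ := hys
          have d_s : Disjoint (s ∩ u) (s \ u) :=
            Finset.sdiff_disjoint.symm.mono_left Finset.inter_subset_right
          have d_t : Disjoint (t ∩ u) (t \ u) :=
            Finset.sdiff_disjoint.symm.mono_left Finset.inter_subset_right
          have hAB := bigU_disj Ωs hd d_s
          have hCD := bigU_disj Ωs hd d_t
          have hAC := bigU_disj Ωs hd (hst.mono (show s ∩ u ⊆ s from Finset.inter_subset_left)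
            (show t ∩ u ⊆ t from Finset.inter_subset_left))
          have hAD := bigU_disj Ωs hd (hst.mono (show s ∩ u ⊆ s from Finset.inter_subset_left)
            (show t \ u ⊆ t from Finset.sdiff_subset))
          have hBC := bigU_disj Ωs hd (hst.mono (show s \ u ⊆ s from Finset.sdiff_subset)
            (show t ∩ u ⊆ t from Finset.inter_subset_left))
          have hBD := bigU_disj Ωs hd (hst.mono (show s \ u ⊆ s from Finset.sdiff_subset)
            (show t \ u ⊆ t from Finset.sdiff_subset))
          have hzex := exchange F E hAB hCD hAC hAD hBC hBD hp hq ha hb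
          have hidxs : (s ∩ u) ∪ (s \ u) = s := by
            ext c
            simp only [Finset.mem_union, Finset.mem_inter, Finset.mem_sdiff]
            tauto
          have hidxt : (t ∩ u) ∪ (t \ u) = t := by
            ext c
            simp only [Finset.mem_union, Finset.mem_inter, Finset.mem_sdiff]
            tauto
          have hbigs : bigU Ωs s = oUnion (bigU Ωs (s ∩ u)) (bigU Ωs (s \ u)) := by
            rw [← bigU_union, hidxs]
          have hbigt : bigU Ωs t = oUnion (bigU Ωs (t ∩ u)) (bigU Ωs (t \ u)) := by
            rw [← bigU_union, hidxt]
          rw [← hbigs, ← hbigt, hxeq, hyeq] at hzex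
          rw [← bigU_union Ωs (s ∩ u) (t ∩ u), ← bigU_union Ωs (s \ u) (t \ u)] at hzex
          have hu_eq : (s ∩ u) ∪ (t ∩ u) = u := by
            ext c
            simp only [Finset.mem_union, Finset.mem_inter]
            have g := fun (h : c ∈ u) => Finset.mem_union.mp (hu h)
            tauto
          have hdiff_eq : (s \ u) ∪ (t \ u) = (s ∪ t) \ u := by
            ext c
            simp only [Finset.mem_union, Finset.mem_sdiff]
            tauto
          rw [hu_eq, hdiff_eq] at hzex
          exact hzex
        · intro C D hCD hUn hC hD hzCD
          have hrefine := eta_refine F E hdisj_st hCD (hUS.symm.trans hUn.symm) hx.1 hy.1 hzCD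
          have hsubs : oSub (bigU Ωs s) (oUnion C D) := by
            intro i a ha
            rw [hUn]
            exact bigU_mono Ωs Finset.subset_union_left i ha
          have hsubt : oSub (bigU Ωs t) (oUnion C D) := by
            intro i a ha
            rw [hUn]
            exact bigU_mono Ωs Finset.subset_union_right i ha
          obtain ⟨u₁, hu₁s, hPs, hQs⟩ := zf_split_inter F E Ωs hd hx hCD hsubs hrefine.1
          obtain ⟨u₂, hu₂t, hPt, hQt⟩ := zf_split_inter F E Ωs hd hy hCD hsubt hrefine.2
          refine ⟨u₁ ∪ u₂, Finset.union_subset (hu₁s.trans Finset.subset_union_left)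
            (hu₂t.trans Finset.subset_union_right), ?_, ?_⟩
          · have hCeq : C = oUnion (oInter (bigU Ωs s) C) (oInter (bigU Ωs t) C) := by
              funext i
              simp only [oUnion, oInter]
              rw [Finset.inter_comm ((bigU Ωs s) i), Finset.inter_comm ((bigU Ωs t) i),
                ← Finset.inter_union_distrib_left]
              have hsub : C i ⊆ (bigU Ωs s) i ∪ (bigU Ωs t) i := by
                intro c hc
                have h' := congrFun hUn i
                have h'' := congrFun hUS i
                simp only [oUnion] at h' h''
                rw [← h'', ← h']
                exact Finset.mem_union_left _ hc
              exact (Finset.inter_eq_left.mpr hsub).symm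
            rw [hCeq, hPs, hPt, ← bigU_union]
          · have hDeq : D = oUnion (oInter (bigU Ωs s) D) (oInter (bigU Ωs t) D) := by
              funext i
              simp only [oUnion, oInter]
              rw [Finset.inter_comm ((bigU Ωs s) i), Finset.inter_comm ((bigU Ωs t) i),
                ← Finset.inter_union_distrib_left]
              have hsub : D i ⊆ (bigU Ωs s) i ∪ (bigU Ωs t) i := by
                intro c hc
                have h' := congrFun hUn i
                have h'' := congrFun hUS i
                simp only [oUnion] at h' h''
                rw [← h'', ← h']
                exact Finset.mem_union_right _ hc
              exact (Finset.inter_eq_left.mpr hsub).symm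
            have hidx : (s \ u₁) ∪ (t \ u₂) = (s ∪ t) \ (u₁ ∪ u₂) := by
              ext c
              simp only [Finset.mem_union, Finset.mem_sdiff]
              have g1 := fun (h : c ∈ u₁) => hu₁s h
              have g2 := fun (h : c ∈ u₂) => hu₂t h
              have g3 := fun (ha : c ∈ s) (hb : c ∈ t) => Finset.disjoint_left.mp hst ha hb
              tauto
            rw [hDeq, hQs, hQt, ← bigU_union, hidx]
      · intro hz
        have hst_diff : (s ∪ t) \ s = t := by
          ext c
          simp only [Finset.mem_sdiff, Finset.mem_union]
          have g := fun (ha : c ∈ s) (hb : c ∈ t) => Finset.disjoint_left.mp hst ha hb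
          tauto
        have hzst : z ∈ img F E (bigU Ωs s) (bigU Ωs t) := by
          have h' := hz.2.1 s Finset.subset_union_left hsn (by rw [hst_diff]; exact htn)
          rwa [hst_diff] at h'
        obtain ⟨⟨x, y⟩, ⟨hxF, hyF⟩, hzeq⟩ := hzst
        refine ⟨(x, y), ⟨?_, ?_⟩, hzeq⟩
        · -- x ∈ Zf s
          refine ⟨hxF, ?_, ?_⟩
          · intro u hu h1 h2
            have hu' : u ⊆ s ∪ t := hu.trans Finset.subset_union_left
            have hz_u : z ∈ img F E (bigU Ωs u) (bigU Ωs ((s ∪ t) \ u)) := by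
              refine hz.2.1 u hu' h1 ?_
              obtain ⟨a, ha⟩ := htn
              exact ⟨a, Finset.mem_sdiff.mpr ⟨Finset.mem_union_right _ ha,
                fun hau => Finset.disjoint_left.mp hst (hu hau) ha⟩⟩
            rw [← hzeq] at hz_u
            have huu : oUnion (bigU Ωs s) (bigU Ωs t) =
                oUnion (bigU Ωs u) (bigU Ωs ((s ∪ t) \ u)) := by
              rw [← hUS, ← bigU_union, Finset.union_sdiff_of_subset hu']
            have href := eta_refine F E hdisj_st
              (bigU_disj Ωs hd Finset.disjoint_sdiff) huu hxF hyF hz_u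
            have h1' := href.1
            rw [bigU_inter Ωs hd, bigU_inter Ωs hd] at h1'
            have e1 : s ∩ u = u := Finset.inter_eq_right.mpr hu
            have e2 : s ∩ ((s ∪ t) \ u) = s \ u := by
              ext c
              simp only [Finset.mem_inter, Finset.mem_sdiff, Finset.mem_union]
              tauto
            rwa [e1, e2] at h1'
          · intro C D hCD hUn hC hD hxCD
            have hy0 : y ∈ img F E (oEmpty r) (bigU Ωs t) := by
              rw [img_empty_left F E hE0]; exact hyF
            obtain ⟨⟨ee, y'⟩, ⟨hee, hy'⟩, hyeq⟩ := hy0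
            obtain ⟨⟨p, q⟩, ⟨hp, hq⟩, hxeq⟩ := hxCD
            have hCsub : oSub C (bigU Ωs s) := by
              intro i a ha
              have h' := congrFun hUn i
              simp only [oUnion] at h'
              rw [← h']
              exact Finset.mem_union_left _ ha
            have hDsub : oSub D (bigU Ωs s) := by
              intro i a ha
              have h' := congrFun hUn i
              simp only [oUnion] at h'
              rw [← h']
              exact Finset.mem_union_right _ ha
            have hCt : oDisj C (bigU Ωs t) := fun i => (hdisj_st i).mono_left (hCsub i)
            have hDt : oDisj D (bigU Ωs t) := fun i => (hdisj_st i).mono_left (hDsub i)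
            have hzex := exchange F E hCD (oDisj_empty_left _) (oDisj_empty_right C)
              hCt (oDisj_empty_right D) hDt hp hq hee hy'
            rw [hUn, oUnion_empty_left, oUnion_empty_right, hxeq, hyeq, hzeq] at hzex
            have hzuni : oUnion C (oUnion D (bigU Ωs t)) = bigU Ωs (s ∪ t) := by
              funext i
              simp only [oUnion]
              rw [← Finset.union_assoc]
              have h' := congrFun hUn i
              simp only [oUnion] at h'
              rw [h']
              have h'' := congrFun hUS i
              simp only [oUnion] at h''
              rw [h'']
            have hDt_ne : oUnion D (bigU Ωs t) ≠ oEmpty r := oUnion_ne_empty_left hD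
            have hCdisj : oDisj C (oUnion D (bigU Ωs t)) := by
              intro i
              simp only [oUnion]
              exact Finset.disjoint_union_right.mpr ⟨hCD i, hCt i⟩
            obtain ⟨w, hw, hCw, hDw⟩ :=
              hz.2.2 C (oUnion D (bigU Ωs t)) hCdisj hzuni hC hDt_ne hzex
            have hws : w ⊆ s := by
              intro j hj
              refine idx_mem_of_sub Ωs hd hne ?_
              intro i a ha
              have h1 : a ∈ (bigU Ωs w) i := by
                simp only [bigU, Finset.mem_biUnion]; exact ⟨j, hj, ha⟩
              rw [← hCw] at h1
              exact hCsub i h1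
            refine ⟨w, hws, hCw, ?_⟩
            have hD_eq : D = oInter (oUnion D (bigU Ωs t)) (bigU Ωs s) := by
              funext i
              simp only [oInter, oUnion]
              rw [Finset.union_inter_distrib_right]
              have hd1 : D i ∩ (bigU Ωs s) i = D i := Finset.inter_eq_left.mpr (hDsub i)
              have hd2 : (bigU Ωs t) i ∩ (bigU Ωs s) i = ∅ :=
                Finset.disjoint_iff_inter_eq_empty.mp (hdisj_st i).symm
              rw [hd1, hd2, Finset.union_empty]
            have hidx : ((s ∪ t) \ w) ∩ s = s \ w := by
              ext c
              simp only [Finset.mem_inter, Finset.mem_sdiff, Finset.mem_union]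
              tauto
            rw [hD_eq, hDw, bigU_inter Ωs hd, hidx]
        · -- y ∈ Zf t
          refine ⟨hyF, ?_, ?_⟩
          · intro u hu h1 h2
            have hu' : u ⊆ s ∪ t := hu.trans Finset.subset_union_right
            have hz_u : z ∈ img F E (bigU Ωs u) (bigU Ωs ((s ∪ t) \ u)) := by
              refine hz.2.1 u hu' h1 ?_
              obtain ⟨a, ha⟩ := hsn
              exact ⟨a, Finset.mem_sdiff.mpr ⟨Finset.mem_union_left _ ha,
                fun hau => Finset.disjoint_left.mp hst ha (hu hau)⟩⟩
            rw [← hzeq] at hz_u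
            have huu : oUnion (bigU Ωs s) (bigU Ωs t) =
                oUnion (bigU Ωs u) (bigU Ωs ((s ∪ t) \ u)) := by
              rw [← hUS, ← bigU_union, Finset.union_sdiff_of_subset hu']
            have href := eta_refine F E hdisj_st
              (bigU_disj Ωs hd Finset.disjoint_sdiff) huu hxF hyF hz_u
            have h2' := href.2
            rw [bigU_inter Ωs hd, bigU_inter Ωs hd] at h2'
            have e1 : t ∩ u = u := Finset.inter_eq_right.mpr hu
            have e2 : t ∩ ((s ∪ t) \ u) = t \ u := by
              ext c
              simp only [Finset.mem_inter, Finset.mem_sdiff, Finset.mem_union]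
              tauto
            rwa [e1, e2] at h2'
          · intro C D hCD hUn hC hD hyCD
            have hx0 : x ∈ img F E (bigU Ωs s) (oEmpty r) := by
              rw [img_empty_right F E hE0]; exact hxF
            obtain ⟨⟨x', ee⟩, ⟨hx', hee⟩, hxeq⟩ := hx0
            obtain ⟨⟨p, q⟩, ⟨hp, hq⟩, hyeq2⟩ := hyCD
            have hCsub : oSub C (bigU Ωs t) := by
              intro i a ha
              have h' := congrFun hUn i
              simp only [oUnion] at h'
              rw [← h']
              exact Finset.mem_union_left _ ha
            have hDsub : oSub D (bigU Ωs t) := by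
              intro i a ha
              have h' := congrFun hUn i
              simp only [oUnion] at h'
              rw [← h']
              exact Finset.mem_union_right _ ha
            have hsC : oDisj (bigU Ωs s) C := fun i => (hdisj_st i).mono_right (hCsub i)
            have hsD : oDisj (bigU Ωs s) D := fun i => (hdisj_st i).mono_right (hDsub i)
            have hzex := exchange F E (oDisj_empty_right _) hCD hsC hsD
              (oDisj_empty_left C) (oDisj_empty_left D) hx' hee hp hq
            rw [oUnion_empty_right, hUn, oUnion_empty_left, hxeq, hyeq2, hzeq] at hzex
            have hzuni : oUnion (oUnion (bigU Ωs s) C) D = bigU Ωs (s ∪ t) := by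
              funext i
              simp only [oUnion]
              rw [Finset.union_assoc]
              have h' := congrFun hUn i
              simp only [oUnion] at h'
              rw [h']
              have h'' := congrFun hUS i
              simp only [oUnion] at h''
              rw [h'']
            have hsC_ne : oUnion (bigU Ωs s) C ≠ oEmpty r :=
              oUnion_ne_empty_left (bigU_ne_empty Ωs hne hsn)
            have hCdisj : oDisj (oUnion (bigU Ωs s) C) D := by
              intro i
              simp only [oUnion]
              exact Finset.disjoint_union_left.mpr ⟨hsD i, hCD i⟩
            obtain ⟨w, hw, hCw, hDw⟩ :=
              hz.2.2 (oUnion (bigU Ωs s) C) D hCdisj hzuni hsC_ne hD hzex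
            have hsw : s ⊆ w := by
              intro j hj
              refine idx_mem_of_sub Ωs hd hne ?_
              intro i a ha
              have h1 : a ∈ (oUnion (bigU Ωs s) C) i := by
                simp only [oUnion]
                apply Finset.mem_union_left
                simp only [bigU, Finset.mem_biUnion]
                exact ⟨j, hj, ha⟩
              rw [hCw] at h1
              exact h1
            refine ⟨w ∩ t, Finset.inter_subset_right, ?_, ?_⟩
            · have hC_eq : C = oInter (oUnion (bigU Ωs s) C) (bigU Ωs t) := by
                funext i
                simp only [oInter, oUnion]
                rw [Finset.union_inter_distrib_right]
                have hd1 : (bigU Ωs s) i ∩ (bigU Ωs t) i = ∅ :=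
                  Finset.disjoint_iff_inter_eq_empty.mp (hdisj_st i)
                have hd2 : C i ∩ (bigU Ωs t) i = C i := Finset.inter_eq_left.mpr (hCsub i)
                rw [hd1, hd2, Finset.empty_union]
              rw [hC_eq, hCw, bigU_inter Ωs hd]
            · have hidx : (s ∪ t) \ w = t \ (w ∩ t) := by
                ext c
                simp only [Finset.mem_sdiff, Finset.mem_union, Finset.mem_inter]
                have g := fun (h : c ∈ s) => hsw h
                tauto
              rw [hDw, hidx]

lemma brack_subset (hd : ∀ i j, i ≠ j → oDisj (Ωs i) (Ωs j))
    {s : Finset (Fin m)} {B : Set ℕ}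
    (hB : Brack F E Ωs (indec F E) s B) : B ⊆ (F.obj (bigU Ωs s) : Set ℕ) := by
  induction hB with
  | single i =>
      intro z hz
      rw [bigU_singleton]
      by_cases h : Ωs i = oEmpty r
      · rw [indec, if_pos h] at hz
        exact absurd hz (Set.notMem_empty z)
      · rw [indec, if_neg h] at hz
        exact hz.1
  | @node s t B₁ B₂ hst hsn htn hB1 hB2 ih1 ih2 =>
      rintro z ⟨⟨x, y⟩, ⟨hx, hy⟩, rfl⟩
      rw [bigU_union]
      exact E.mem_η (bigU_disj Ωs hd hst) x (ih1 hx) y (ih2 hy)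

lemma brack_singleton {leaf : Obj r → Set ℕ} {s : Finset (Fin m)} {B : Set ℕ} {i : Fin m}
    (hB : Brack F E Ωs leaf s B) (hs : s = {i}) : B = leaf (Ωs i) := by
  induction hB with
  | single j =>
      have : j = i := Finset.singleton_injective hs
      subst this; rfl
  | @node s t B₁ B₂ hst hsn htn hB1 hB2 ih1 ih2 =>
      exfalso
      obtain ⟨a, ha⟩ := hsn
      obtain ⟨b, hb⟩ := htn
      have ha' : a ∈ s ∪ t := Finset.mem_union_left _ ha
      have hb' : b ∈ s ∪ t := Finset.mem_union_right _ hb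
      rw [hs, Finset.mem_singleton] at ha' hb'
      subst ha'; subst hb'
      exact Finset.disjoint_left.mp hst ha hb

lemma brack_empty_leaf {i0 : Fin m} (h0 : Ωs i0 = oEmpty r)
    {s : Finset (Fin m)} {B : Set ℕ}
    (hB : Brack F E Ωs (indec F E) s B) : i0 ∈ s → B = ∅ := by
  induction hB with
  | single j =>
      intro hj
      rw [Finset.mem_singleton] at hj
      subst hj
      rw [indec, if_pos h0]
  | @node s t B₁ B₂ hst hsn htn hB1 hB2 ih1 ih2 =>
      intro hi
      rcases Finset.mem_union.mp hi with h | h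
      · rw [ih1 h, Set.empty_prod, Set.image_empty]
      · rw [ih2 h, Set.prod_empty, Set.image_empty]

lemma brack_no_unit (hd : ∀ i j, i ≠ j → oDisj (Ωs i) (Ωs j))
    (hE0 : F.obj (oEmpty r) = ∅) {s : Finset (Fin m)} {B : Set ℕ}
    (hB : Brack F E Ωs (indec F E) s B) (hns : ¬ ∃ i, s = {i}) : B = ∅ := by
  cases hB with
  | single i => exact absurd ⟨i, rfl⟩ hns
  | node hst hsn htn h1 h2 =>
      rename_i s' t' B₁ B₂
      have h1s := brack_subset F E Ωs hd h1
      have h2s := brack_subset F E Ωs hd h2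
      have hsub : E.η (bigU Ωs s') (bigU Ωs t') '' (B₁ ×ˢ B₂) ⊆
          img F E (bigU Ωs s') (bigU Ωs t') := by
        rintro z ⟨⟨x, y⟩, ⟨hx, hy⟩, rfl⟩
        exact ⟨(x, y), ⟨h1s hx, h2s hy⟩, rfl⟩
      rw [img_eq_empty_of_no_unit F E hE0 (bigU_disj Ωs hd hst)] at hsub
      exact Set.subset_empty_iff.mp hsub

end Main

end Stmt10Aux
/-- `m`-Permutability for `(F_Η, Η)`: all `Η`-bracketings of
`F_Η[Ω₁], …, F_Η[Ω_m]` are equal to each other. -/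
theorem stmt10 {r : ℕ} (hr : 0 < r) (F : Species r) (E : CompOp F)
    (hF : ∃ Ω : Obj r, (F.obj Ω).Nonempty)
    (m : ℕ) (Ωs : Fin m → Obj r) (hd : ∀ i j, i ≠ j → oDisj (Ωs i) (Ωs j))
    (B₁ B₂ : Set ℕ)
    (hB₁ : Brack F E Ωs (indec F E) Finset.univ B₁)
    (hB₂ : Brack F E Ωs (indec F E) Finset.univ B₂) :
    B₁ = B₂ := by
  classical
  by_cases hne : ∀ i, Ωs i ≠ oEmpty r
  · by_cases hone : ∃ i : Fin m, (Finset.univ : Finset (Fin m)) = {i}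
    · obtain ⟨i, hi⟩ := hone
      rw [Stmt10Aux.brack_singleton F E Ωs hB₁ hi, Stmt10Aux.brack_singleton F E Ωs hB₂ hi]
    · by_cases hE0 : (F.obj (oEmpty r)).Nonempty
      · rw [Stmt10Aux.brack_eq_Zf F E Ωs hd hne hE0 hB₁,
          Stmt10Aux.brack_eq_Zf F E Ωs hd hne hE0 hB₂]
      · have hE0' : F.obj (oEmpty r) = ∅ := Finset.not_nonempty_iff_eq_empty.mp hE0
        rw [Stmt10Aux.brack_no_unit F E Ωs hd hE0' hB₁ hone,
          Stmt10Aux.brack_no_unit F E Ωs hd hE0' hB₂ hone]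
  · push_neg at hne
    obtain ⟨i0, h0⟩ := hne
    rw [Stmt10Aux.brack_empty_leaf F E Ωs h0 hB₁ (Finset.mem_univ i0),
      Stmt10Aux.brack_empty_leaf F E Ωs h0 hB₂ (Finset.mem_univ i0)]

end
end

section
/- (Functoriality of F_Η^(k)) Let F be an r-sort species admitting a composition operator Η. For each morphism f : Ω → Ω̃ in Set^r and every integer k ≥ 0, one has F[f](F_Η^(k)[Ω]) = F_Η^(k)[Ω̃]; hence each F_Η^(k) is a functor from Set^r to Set, i.e., an r-sort species. -/
open scoped Classical

noncomputable section

variable {r : ℕ}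

section AuxProof

variable {r : ℕ}

/-- Inverse morphism. -/
def invMor {Ω Ω' : Obj r} (f : Mor Ω Ω') : Mor Ω' Ω := fun i => (f i).symm

lemma invMor_invMor {Ω Ω' : Obj r} (f : Mor Ω Ω') : invMor (invMor f) = f := by
  funext i; simp [invMor]

lemma map_inv_right (F : Species r) {Ω Ω' : Obj r} (f : Mor Ω Ω') :
    ∀ x ∈ F.obj Ω, F.map (invMor f) (F.map f x) = x := by
  intro x hx
  have h : compMor f (invMor f) = idMor Ω := by
    funext i; exact (f i).self_trans_symm
  have h2 := F.map_comp f (invMor f) x hx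
  rw [h, F.map_id Ω x hx] at h2
  exact h2.symm

lemma map_inv_left (F : Species r) {Ω Ω' : Obj r} (f : Mor Ω Ω') :
    ∀ y ∈ F.obj Ω', F.map f (F.map (invMor f) y) = y := by
  intro y hy
  have := map_inv_right F (invMor f) y hy
  rwa [invMor_invMor] at this

lemma apMor_mem {Ω Ω' : Obj r} (f : Mor Ω Ω') (i : Fin r) {a : ℕ} (ha : a ∈ Ω i) :
    apMor f i a ∈ Ω' i := by
  rw [apMor, dif_pos ha]; exact ((f i) ⟨a, ha⟩).2

lemma apMor_injOn {Ω Ω' : Obj r} (f : Mor Ω Ω') (i : Fin r) :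
    Set.InjOn (apMor f i) (Ω i) := by
  intro a ha b hb hab
  have ha' : a ∈ Ω i := ha
  have hb' : b ∈ Ω i := hb
  simp only [apMor, dif_pos ha', dif_pos hb'] at hab
  have := (f i).injective (Subtype.ext hab)
  exact congrArg Subtype.val this

lemma apMor_inv {Ω Ω' : Obj r} (f : Mor Ω Ω') (i : Fin r) {a : ℕ} (ha : a ∈ Ω i) :
    apMor (invMor f) i (apMor f i a) = a := by
  have h1 : apMor f i a = ((f i) ⟨a, ha⟩ : ℕ) := by rw [apMor, dif_pos ha]
  have h2 : apMor f i a ∈ Ω' i := apMor_mem f i ha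
  rw [apMor, dif_pos h2]
  have : (⟨apMor f i a, h2⟩ : {x // x ∈ Ω' i}) = (f i) ⟨a, ha⟩ := Subtype.ext h1
  rw [invMor, this, Equiv.symm_apply_apply]

lemma oImage_self {Ω Ω' : Obj r} (f : Mor Ω Ω') : oImage f Ω = Ω' := by
  funext i
  ext b
  simp only [oImage, Finset.mem_image]
  constructor
  · rintro ⟨a, ha, rfl⟩; exact apMor_mem f i ha
  · intro hb
    refine ⟨((f i).symm ⟨b, hb⟩ : ℕ), ((f i).symm ⟨b, hb⟩).2, ?_⟩
    rw [apMor, dif_pos ((f i).symm ⟨b, hb⟩).2]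
    have : (⟨((f i).symm ⟨b, hb⟩ : ℕ), ((f i).symm ⟨b, hb⟩).2⟩ : {x // x ∈ Ω i})
        = (f i).symm ⟨b, hb⟩ := rfl
    rw [this, Equiv.apply_symm_apply]

lemma oImage_sub {Ω Ω' : Obj r} (f : Mor Ω Ω') {O : Obj r} (hO : oSub O Ω) :
    oSub (oImage f O) Ω' := by
  intro i b hb
  rcases Finset.mem_image.mp hb with ⟨a, ha, rfl⟩
  exact apMor_mem f i (hO i ha)

lemma oImage_union {Ω Ω' : Obj r} (f : Mor Ω Ω') (A B : Obj r) :
    oImage f (oUnion A B) = oUnion (oImage f A) (oImage f B) := by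
  funext i; exact Finset.image_union _ _

lemma oImage_disj {Ω Ω' : Obj r} (f : Mor Ω Ω') {A B : Obj r}
    (hA : oSub A Ω) (hB : oSub B Ω) (h : oDisj A B) :
    oDisj (oImage f A) (oImage f B) := by
  intro i
  rw [Finset.disjoint_left]
  intro c hc hc'
  rcases Finset.mem_image.mp hc with ⟨a, ha, rfl⟩
  rcases Finset.mem_image.mp hc' with ⟨b, hb, hab⟩
  have : b = a := apMor_injOn f i (hB i hb) (hA i ha) hab
  subst this
  exact Finset.disjoint_left.mp (h i) ha hb

lemma ne_oEmpty_iff {O : Obj r} : O ≠ oEmpty r ↔ ∃ i, (O i).Nonempty := by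
  constructor
  · intro h
    by_contra hc
    push_neg at hc
    exact h (funext fun i => by
      have := hc i
      exact this)
  · rintro ⟨i, hi⟩ h
    rw [h] at hi
    simp [oEmpty] at hi

lemma oImage_ne_empty {Ω Ω' : Obj r} (f : Mor Ω Ω') {O : Obj r} (h : O ≠ oEmpty r) :
    oImage f O ≠ oEmpty r := by
  rw [ne_oEmpty_iff] at h ⊢
  rcases h with ⟨i, a, ha⟩
  exact ⟨i, apMor f i a, Finset.mem_image_of_mem _ ha⟩

/-- Cast of a morphism along equalities of objects. -/
def castMor {Ω Ω' Ωa Ωb : Obj r} (h1 : Ω = Ωa) (h2 : Ω' = Ωb) (f : Mor Ω Ω') :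
    Mor Ωa Ωb := h1 ▸ h2 ▸ f

lemma map_castMor (F : Species r) {Ω Ω' Ωa Ωb : Obj r} (h1 : Ω = Ωa) (h2 : Ω' = Ωb)
    (f : Mor Ω Ω') (x : ℕ) : F.map (castMor h1 h2 f) x = F.map f x := by
  subst h1; subst h2; rfl

lemma castMor_val {Ω Ω' Ωa Ωb : Obj r} (h1 : Ω = Ωa) (h2 : Ω' = Ωb)
    (f : Mor Ω Ω') (i : Fin r) (a : {x // x ∈ Ωa i}) :
    ((castMor h1 h2 f) i a : ℕ) = apMor f i a.1 := by
  subst h1; subst h2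
  show ((f i) a : ℕ) = apMor f i a.1
  rw [apMor, dif_pos a.2]

lemma finsetSumEquiv_left {s t : Finset ℕ} (h : Disjoint s t) (a : {x // x ∈ s ∪ t})
    (ha : a.1 ∈ s) : finsetSumEquiv h a = Sum.inl ⟨a.1, ha⟩ := by
  have hs : (a : ℕ) ∈ (↑s : Set ℕ) := by exact_mod_cast ha
  simp [finsetSumEquiv, Equiv.Set.union, Equiv.Set.union', hs]
  rw [dif_pos ha]

lemma finsetSumEquiv_right {s t : Finset ℕ} (h : Disjoint s t) (a : {x // x ∈ s ∪ t})
    (ha : a.1 ∈ t) : finsetSumEquiv h a = Sum.inr ⟨a.1, ha⟩ := by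
  have hs : (a : ℕ) ∉ (↑s : Set ℕ) := by
    intro hc
    exact (Finset.disjoint_left.mp h (by exact_mod_cast hc) ha).elim
  simp [finsetSumEquiv, Equiv.Set.union, Equiv.Set.union', hs]
  rw [dif_neg (fun hc => (Finset.disjoint_left.mp h hc ha).elim)]

lemma finsetSumEquiv_symm_left {s t : Finset ℕ} (h : Disjoint s t) (b : {x // x ∈ s}) :
    ((finsetSumEquiv h).symm (Sum.inl b) : ℕ) = b.1 := by
  simp [finsetSumEquiv, Equiv.Set.union, Equiv.Set.union', Set.inclusion]

lemma finsetSumEquiv_symm_right {s t : Finset ℕ} (h : Disjoint s t) (b : {x // x ∈ t}) :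
    ((finsetSumEquiv h).symm (Sum.inr b) : ℕ) = b.1 := by
  simp [finsetSumEquiv, Equiv.Set.union, Equiv.Set.union', Set.inclusion]

lemma morUnion_val_left {Ω₁ Ω₂ Ω₁' Ω₂' : Obj r} (h : oDisj Ω₁ Ω₂) (h' : oDisj Ω₁' Ω₂')
    (f : Mor Ω₁ Ω₁') (g : Mor Ω₂ Ω₂') (i : Fin r) (a : {x // x ∈ oUnion Ω₁ Ω₂ i})
    (ha : a.1 ∈ Ω₁ i) :
    ((morUnion h h' f g) i a : ℕ) = ((f i) ⟨a.1, ha⟩ : ℕ) := by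
  show ((finsetUnionEquiv (h i) (h' i) (f i) (g i)) a : ℕ) = _
  show ((finsetSumEquiv (h' i)).symm (((f i).sumCongr (g i)) (finsetSumEquiv (h i) a)) : ℕ) = _
  rw [finsetSumEquiv_left (h i) a ha]
  show ((finsetSumEquiv (h' i)).symm (Sum.inl ((f i) ⟨a.1, ha⟩)) : ℕ) = _
  rw [finsetSumEquiv_symm_left]

lemma morUnion_val_right {Ω₁ Ω₂ Ω₁' Ω₂' : Obj r} (h : oDisj Ω₁ Ω₂) (h' : oDisj Ω₁' Ω₂')
    (f : Mor Ω₁ Ω₁') (g : Mor Ω₂ Ω₂') (i : Fin r) (a : {x // x ∈ oUnion Ω₁ Ω₂ i})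
    (ha : a.1 ∈ Ω₂ i) :
    ((morUnion h h' f g) i a : ℕ) = ((g i) ⟨a.1, ha⟩ : ℕ) := by
  show ((finsetUnionEquiv (h i) (h' i) (f i) (g i)) a : ℕ) = _
  show ((finsetSumEquiv (h' i)).symm (((f i).sumCongr (g i)) (finsetSumEquiv (h i) a)) : ℕ) = _
  rw [finsetSumEquiv_right (h i) a ha]
  show ((finsetSumEquiv (h' i)).symm (Sum.inr ((g i) ⟨a.1, ha⟩)) : ℕ) = _
  rw [finsetSumEquiv_symm_right]

lemma restrictMor_val {Ω Ω' : Obj r} (f : Mor Ω Ω') {O : Obj r} (hO : oSub O Ω)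
    (i : Fin r) (a : {x // x ∈ O i}) :
    ((restrictMor f hO) i a : ℕ) = apMor f i a.1 := rfl

/-- Pushforward of an η-image along a morphism. -/
lemma eta_push (F : Species r) (E : CompOp F) {Ω Ω' : Obj r} (f : Mor Ω Ω')
    {Ω₁ Ω₂ : Obj r} (h12 : oDisj Ω₁ Ω₂) (hU : oUnion Ω₁ Ω₂ = Ω)
    (h1 : oSub Ω₁ Ω) (h2 : oSub Ω₂ Ω)
    {x : ℕ} (hx : x ∈ F.obj Ω₁) {y : ℕ} (hy : y ∈ F.obj Ω₂) :
    F.map f (E.η Ω₁ Ω₂ (x, y)) =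
      E.η (oImage f Ω₁) (oImage f Ω₂)
        (F.map (restrictMor f h1) x, F.map (restrictMor f h2) y) := by
  have h12' : oDisj (oImage f Ω₁) (oImage f Ω₂) := oImage_disj f h1 h2 h12
  have hU' : oUnion (oImage f Ω₁) (oImage f Ω₂) = Ω' := by
    rw [← oImage_union f, hU, oImage_self]
  have hcast : castMor hU.symm hU'.symm f
      = morUnion h12 h12' (restrictMor f h1) (restrictMor f h2) := by
    funext i
    apply Equiv.ext
    intro a
    apply Subtype.ext
    rw [castMor_val]
    rcases Finset.mem_union.mp a.2 with ha | ha
    · rw [morUnion_val_left h12 h12' _ _ i a ha, restrictMor_val]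
    · rw [morUnion_val_right h12 h12' _ _ i a ha, restrictMor_val]
  have := E.natural h12 h12' (restrictMor f h1) (restrictMor f h2) x hx y hy
  rw [← hcast] at this
  rw [← this, map_castMor]

lemma indec_subset_obj (F : Species r) (E : CompOp F) (Ω : Obj r) :
    indec F E Ω ⊆ (F.obj Ω : Set ℕ) := by
  rw [indec]
  split
  · exact Set.empty_subset _
  · exact Set.diff_subset

lemma indecK_subset_obj (F : Species r) (E : CompOp F) :
    ∀ (k : ℕ) (Ω : Obj r), indecK F E k Ω ⊆ (F.obj Ω : Set ℕ) := by
  intro k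
  induction k with
  | zero =>
    intro Ω x hx
    simp only [indecK] at hx
    split at hx
    · next h => rw [h]; exact hx
    · exact absurd hx (Set.notMem_empty x)
  | succ k ih =>
    intro Ω x hx
    simp only [indecK, Set.mem_iUnion] at hx
    rcases hx with ⟨Ω₁, hsub, hx⟩
    rcases hx with ⟨⟨a, b⟩, ⟨ha, hb⟩, rfl⟩
    have hdisj : oDisj Ω₁ (oDiff Ω Ω₁) := fun i => Finset.disjoint_sdiff
    have hU : oUnion Ω₁ (oDiff Ω Ω₁) = Ω := by
      funext i; exact Finset.union_sdiff_of_subset (hsub i)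
    have := E.mem_η hdisj a (indec_subset_obj F E Ω₁ ha) b (ih _ hb)
    rwa [hU] at this

lemma indec_mono (F : Species r) (E : CompOp F) {Ω Ω' : Obj r} (f : Mor Ω Ω') :
    F.map f '' indec F E Ω ⊆ indec F E Ω' := by
  rintro _ ⟨x, hx, rfl⟩
  have hxo : x ∈ F.obj Ω := indec_subset_obj F E Ω hx
  rw [indec] at hx
  split at hx
  · exact absurd hx (Set.notMem_empty x)
  next hne =>
  rcases hx with ⟨-, hxd⟩
  rw [indec, if_neg (by rw [← oImage_self f]; exact oImage_ne_empty f hne)]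
  refine ⟨F.map_mem f x hxo, ?_⟩
  intro hmem
  simp only [Set.mem_iUnion] at hmem
  rcases hmem with ⟨⟨Ω₁', Ω₂'⟩, hdisj', hne1', hne2', hU', hy⟩
  rcases hy with ⟨⟨a, b⟩, ⟨ha, hb⟩, heq⟩
  apply hxd
  simp only [Set.mem_iUnion]
  set g := invMor f with hg
  have h1' : oSub Ω₁' Ω' := by
    intro i c hc; rw [← hU']; exact Finset.mem_union_left _ hc
  have h2' : oSub Ω₂' Ω' := by
    intro i c hc; rw [← hU']; exact Finset.mem_union_right _ hc
  have hpush := eta_push F E g hdisj' hU' h1' h2' ha hb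
  have hback : F.map g (F.map f x) = x := map_inv_right F f x hxo
  rw [← heq] at hback
  refine ⟨(oImage g Ω₁', oImage g Ω₂'), oImage_disj g h1' h2' hdisj',
    oImage_ne_empty g hne1', oImage_ne_empty g hne2', ?_, ?_⟩
  · rw [← oImage_union g, hU', oImage_self]
  · rw [← hback, hpush]
    exact ⟨(F.map (restrictMor g h1') a, F.map (restrictMor g h2') b),
      ⟨F.map_mem _ a ha, F.map_mem _ b hb⟩, rfl⟩

lemma indecK_mono (F : Species r) (E : CompOp F) :
    ∀ (k : ℕ) {Ω Ω' : Obj r} (f : Mor Ω Ω'),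
      F.map f '' indecK F E k Ω ⊆ indecK F E k Ω' := by
  intro k
  induction k with
  | zero =>
    intro Ω Ω' f
    rintro _ ⟨x, hx, rfl⟩
    simp only [indecK] at hx
    split at hx
    · next h =>
      have hΩ' : Ω' = oEmpty r := by
        rw [← oImage_self f]
        funext i
        have hi : Ω i = ∅ := congrFun h i
        simp [oImage, oEmpty, hi]
      simp only [indecK, if_pos hΩ']
      have hobj : F.obj Ω' = F.obj (oEmpty r) := by rw [hΩ']
      rw [← hobj]
      exact_mod_cast F.map_mem f x (by rw [h]; exact hx)
    · exact absurd hx (Set.notMem_empty x)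
  | succ k ih =>
    intro Ω Ω' f
    rintro _ ⟨x, hx, rfl⟩
    simp only [indecK, Set.mem_iUnion] at hx
    rcases hx with ⟨Ω₁, hsub, ⟨⟨a, b⟩, ⟨ha, hb⟩, rfl⟩⟩
    set Ω₂ := oDiff Ω Ω₁ with hΩ₂
    have hdisj : oDisj Ω₁ Ω₂ := fun i => Finset.disjoint_sdiff
    have hU : oUnion Ω₁ Ω₂ = Ω := by
      funext i; exact Finset.union_sdiff_of_subset (hsub i)
    have h2 : oSub Ω₂ Ω := fun i => Finset.sdiff_subset
    have hao : a ∈ F.obj Ω₁ := indec_subset_obj F E Ω₁ ha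
    have hbo : b ∈ F.obj Ω₂ := indecK_subset_obj F E k Ω₂ hb
    have hpush := eta_push F E f hdisj hU hsub h2 hao hbo
    have hdisj' : oDisj (oImage f Ω₁) (oImage f Ω₂) := oImage_disj f hsub h2 hdisj
    have hU' : oUnion (oImage f Ω₁) (oImage f Ω₂) = Ω' := by
      rw [← oImage_union f, hU, oImage_self]
    have hdiff : oDiff Ω' (oImage f Ω₁) = oImage f Ω₂ := by
      funext i
      have h3 : Ω' i = oImage f Ω₁ i ∪ oImage f Ω₂ i := congrFun hU'.symm i
      show Ω' i \ oImage f Ω₁ i = oImage f Ω₂ i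
      rw [h3]
      exact Finset.union_sdiff_cancel_left (hdisj' i)
    simp only [indecK, Set.mem_iUnion]
    refine ⟨oImage f Ω₁, oImage_sub f hsub, ?_⟩
    rw [hdiff, hpush]
    exact ⟨(F.map (restrictMor f hsub) a, F.map (restrictMor f h2) b),
      ⟨indec_mono F E _ ⟨a, ha, rfl⟩, ih _ ⟨b, hb, rfl⟩⟩, rfl⟩

end AuxProof

/-- Functoriality of `F_Η^(k)`: for every morphism `f : Ω → Ω̃` of `Set^r` and
every `k ≥ 0`, `F[f](F_Η^(k)[Ω]) = F_Η^(k)[Ω̃]`; hence each `F_Η^(k)` is a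
functor `Set^r → Set`, i.e. an `r`-sort species. -/
theorem stmt11 {r : ℕ} (hr : 0 < r) (F : Species r) (E : CompOp F)
    (hF : ∃ Ω : Obj r, (F.obj Ω).Nonempty)
    (Ω Ω' : Obj r) (f : Mor Ω Ω') (k : ℕ) :
    F.map f '' indecK F E k Ω = indecK F E k Ω' := by
  apply Set.Subset.antisymm
  · exact indecK_mono F E k f
  · intro y hy
    have hyo : y ∈ F.obj Ω' := indecK_subset_obj F E k Ω' hy
    refine ⟨F.map (invMor f) y, indecK_mono F E k (invMor f) ⟨y, hy, rfl⟩, ?_⟩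
    exact map_inv_left F f y hyo

end
end
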